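/- arXiv:1302.0158 — 4 statements merged into one kernel-verified Lean document; each statement's English description precedes it below -/
import Mathlib

section
/- Let X_1, X_2, ... be i.i.d. real random variables with P(X_i = 0) = 0, and set V_m^2 = \sum_{i=1}^m X_i^2. Then for all integers j < k, E[(X_{j+1}^2 / V_{j+1}^2) \cdot (X_{k+1}^2 / V_{k+1}^2)] = 1 / ((j+1)(k+1)). -/
open MeasureTheory ProbabilityTheory Filter

noncomputable section

/-- Partial sums `S_m = X_1 + ... + X_m`. -/
def S {Ω : Type*} (X : ℕ → Ω → ℝ) (m : ℕ) (ω : Ω) : ℝ := ∑ i ∈ Finset.Icc 1 m, X i ω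

/-- `V_m^2 = X_1^2 + ... + X_m^2`. -/
def V2 {Ω : Type*} (X : ℕ → Ω → ℝ) (m : ℕ) (ω : Ω) : ℝ := ∑ i ∈ Finset.Icc 1 m, (X i ω)^2

/-- `V_m = (X_1^2 + ... + X_m^2)^{1/2}`. -/
def V {Ω : Type*} (X : ℕ → Ω → ℝ) (m : ℕ) (ω : Ω) : ℝ := Real.sqrt (V2 X m ω)

/-- Self-normalized sums `Y_m = S_m / V_m`. -/
def Ysn {Ω : Type*} (X : ℕ → Ω → ℝ) (m : ℕ) (ω : Ω) : ℝ := S X m ω / V X m ω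

/-- The `X i`, `i ≥ 1`, are i.i.d. -/
def IID {Ω : Type*} [MeasurableSpace Ω] (μ : Measure Ω) (X : ℕ → Ω → ℝ) : Prop :=
  iIndepFun X μ ∧ ∀ i, IdentDistrib (X i) (X 1) μ μ

/-- Each `X i` is symmetric (about 0) in distribution. -/
def SymmLaw {Ω : Type*} [MeasurableSpace Ω] (μ : Measure Ω) (X : ℕ → Ω → ℝ) : Prop :=
  ∀ i, Measure.map (X i) μ = Measure.map (fun ω => -X i ω) μ

/-- Convergence in distribution of real random variables, tested against bounded
continuous functions. -/
def TendstoInDistr {Ω : Type*} [MeasurableSpace Ω] (μ : Measure Ω) (Z : ℕ → Ω → ℝ)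
    (ν : Measure ℝ) : Prop :=
  ∀ f : BoundedContinuousFunction ℝ ℝ,
    Tendsto (fun n => ∫ ω, f (Z n ω) ∂μ) atTop (nhds (∫ x, f x ∂ν))

/-- `X` is in the domain of attraction of `N(0,1)`: for some norming constants `a_n > 0`
the normalized partial sums converge in distribution to the standard normal law. -/
def DAN {Ω : Type*} [MeasurableSpace Ω] (μ : Measure Ω) (X : ℕ → Ω → ℝ) : Prop :=
  ∃ a : ℕ → ℝ, (∀ n, 0 < a n) ∧
    TendstoInDistr μ (fun n ω => S X n ω / a n) (gaussianReal 0 1)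

/-- The joint law of any injectively-reindexed finite subfamily of an i.i.d. family is
the product of copies of the common law. -/
lemma map_eq_pi' {Ω : Type*} [MeasurableSpace Ω] (μ : Measure Ω) [IsProbabilityMeasure μ]
    (X : ℕ → Ω → ℝ) (hmeas : ∀ i, Measurable (X i)) (hiid : IID μ X)
    (n : ℕ) (σ : Fin n → ℕ) (hσ : Function.Injective σ) :
    Measure.map (fun ω (i : Fin n) => X (σ i) ω) μ
      = Measure.pi (fun _ => Measure.map (X 1) μ) := by
  classical
  have hν : ∀ m, Measure.map (X m) μ = Measure.map (X 1) μ := fun m => (hiid.2 m).map_eq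
  refine (Measure.pi_eq fun s hs => ?_).symm
  have hmeasv : Measurable (fun ω (i : Fin n) => X (σ i) ω) :=
    measurable_pi_lambda _ fun i => hmeas (σ i)
  rw [Measure.map_apply hmeasv (MeasurableSet.univ_pi hs)]
  have hpre : (fun ω (i : Fin n) => X (σ i) ω) ⁻¹' Set.pi Set.univ s
      = ⋂ i : Fin n, X (σ i) ⁻¹' s i := by
    ext ω; simp [Set.mem_pi]
  rw [hpre]
  set sets : ℕ → Set ℝ := fun m => ⋂ i ∈ Finset.univ.filter (fun i : Fin n => σ i = m), s i
    with hsets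
  have hsets_meas : ∀ m, MeasurableSet (sets m) :=
    fun m => MeasurableSet.biInter (Finset.countable_toSet _) fun i _ => hs i
  have hsetsσ : ∀ i, sets (σ i) = s i := by
    intro i
    ext x
    simp [hsets, hσ.eq_iff]
  have key := hiid.1.measure_inter_preimage_eq_mul (Finset.image σ Finset.univ)
      (sets := sets) (fun m _ => hsets_meas m)
  have hL : (⋂ m ∈ Finset.image σ Finset.univ, X m ⁻¹' sets m)
      = ⋂ i : Fin n, X (σ i) ⁻¹' s i := by
    ext ω
    simp only [Set.mem_iInter, Finset.mem_image, Finset.mem_univ, true_and, Set.mem_preimage]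
    constructor
    · intro h i
      have h2 := h (σ i) ⟨i, rfl⟩
      rwa [hsetsσ] at h2
    · rintro h m ⟨i, rfl⟩
      rw [hsetsσ]; exact h i
  have hR : (∏ m ∈ Finset.image σ Finset.univ, μ (X m ⁻¹' sets m))
      = ∏ i : Fin n, (Measure.map (X 1) μ) (s i) := by
    rw [Finset.prod_image (fun i _ i' _ h => hσ h)]
    refine Finset.prod_congr rfl fun i _ => ?_
    rw [hsetsσ, ← hν (σ i), Measure.map_apply (hmeas (σ i)) (hs i)]
  rw [hL] at key
  rw [key, hR]

/-- Exchangeability: integrals of a fixed measurable functional of an injectively-reindexed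
i.i.d. vector do not depend on the reindexing. -/
lemma integral_vec' {Ω : Type*} [MeasurableSpace Ω] (μ : Measure Ω) [IsProbabilityMeasure μ]
    (X : ℕ → Ω → ℝ) (hmeas : ∀ i, Measurable (X i)) (hiid : IID μ X)
    {n : ℕ} (σ τ : Fin n → ℕ) (hσ : Function.Injective σ) (hτ : Function.Injective τ)
    (F : (Fin n → ℝ) → ℝ) (hF : Measurable F) :
    ∫ ω, F (fun i => X (σ i) ω) ∂μ = ∫ ω, F (fun i => X (τ i) ω) ∂μ := by
  have hmσ : Measurable (fun ω (i : Fin n) => X (σ i) ω) :=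
    measurable_pi_lambda _ fun i => hmeas (σ i)
  have hmτ : Measurable (fun ω (i : Fin n) => X (τ i) ω) :=
    measurable_pi_lambda _ fun i => hmeas (τ i)
  rw [← integral_map hmσ.aemeasurable hF.aestronglyMeasurable,
      ← integral_map hmτ.aemeasurable hF.aestronglyMeasurable,
      map_eq_pi' μ X hmeas hiid n σ hσ, map_eq_pi' μ X hmeas hiid n τ hτ]

lemma V2_eq_sum_range {Ω : Type*} (X : ℕ → Ω → ℝ) (m : ℕ) (ω : Ω) :
    V2 X m ω = ∑ i ∈ Finset.range m, (X (i+1) ω)^2 := by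
  unfold V2
  rw [← Finset.Ico_add_one_right_eq_Icc, Finset.sum_Ico_eq_sum_range]
  simp [add_comm]

lemma sq_div_V2_mem {Ω : Type*} (X : ℕ → Ω → ℝ) {i m : ℕ} (h1 : 1 ≤ i) (h2 : i ≤ m) (ω : Ω) :
    0 ≤ (X i ω)^2 / V2 X m ω ∧ (X i ω)^2 / V2 X m ω ≤ 1 := by
  have hle : (X i ω)^2 ≤ V2 X m ω :=
    Finset.single_le_sum (f := fun l => (X l ω)^2)
      (fun _ _ => sq_nonneg _) (Finset.mem_Icc.2 ⟨h1, h2⟩)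
  have h0 : 0 ≤ V2 X m ω := le_trans (sq_nonneg _) hle
  refine ⟨div_nonneg (sq_nonneg _) h0, ?_⟩
  rcases eq_or_lt_of_le h0 with h | h
  · simp [← h]
  · rw [div_le_one h]; exact hle

lemma V2_pos_ae {Ω : Type*} [MeasurableSpace Ω] (μ : Measure Ω) (X : ℕ → Ω → ℝ)
    (hzero : μ {ω | X 1 ω = 0} = 0) {m : ℕ} (hm : 1 ≤ m) :
    ∀ᵐ ω ∂μ, 0 < V2 X m ω := by
  have h : ∀ᵐ ω ∂μ, X 1 ω ≠ 0 := by
    rw [ae_iff]; simpa using hzero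
  filter_upwards [h] with ω hω
  have hle : (X 1 ω)^2 ≤ V2 X m ω :=
    Finset.single_le_sum (f := fun l => (X l ω)^2)
      (fun _ _ => sq_nonneg _) (Finset.mem_Icc.2 ⟨le_refl _, hm⟩)
  exact lt_of_lt_of_le (lt_of_le_of_ne (sq_nonneg _) (Ne.symm (pow_ne_zero 2 hω))) hle

lemma V2_measurable {Ω : Type*} [MeasurableSpace Ω] (X : ℕ → Ω → ℝ)
    (hmeas : ∀ i, Measurable (X i)) (m : ℕ) : Measurable (fun ω => V2 X m ω) := by
  unfold V2
  exact Finset.measurable_sum _ fun l _ => (hmeas l).pow_const 2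

/-- For i.i.d. `X_i` with `P(X_i = 0) = 0`, for all `j < k`,
`E[(X_{j+1}^2/V_{j+1}^2)(X_{k+1}^2/V_{k+1}^2)] = 1/((j+1)(k+1))`. -/
theorem stmt1 {Ω : Type*} [MeasurableSpace Ω] (μ : Measure Ω) [IsProbabilityMeasure μ]
    (X : ℕ → Ω → ℝ)
    (hmeas : ∀ i, Measurable (X i))
    (hiid : IID μ X)
    (hzero : ∀ i, μ {ω | X i ω = 0} = 0) :
    ∀ j k : ℕ, j < k →
      ∫ ω, ((X (j+1) ω)^2 / V2 X (j+1) ω) * ((X (k+1) ω)^2 / V2 X (k+1) ω) ∂μ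
        = 1 / (((j : ℝ) + 1) * ((k : ℝ) + 1)) := by
  intro j k hjk
  classical
  have hj1 : j < k + 1 := by omega
  have hk1 : k < k + 1 := by omega
  set a : Fin (k+1) := ⟨j, hj1⟩ with ha
  set b : Fin (k+1) := ⟨k, hk1⟩ with hb
  set W : ℕ → (Fin (k+1) → ℝ) → ℝ := fun m x =>
    ∑ t ∈ Finset.univ.filter (fun t : Fin (k+1) => (t : ℕ) < m), (x t)^2 with hW
  have hWmeas : ∀ m, Measurable (W m) :=
    fun m => Finset.measurable_sum _ fun t _ => (measurable_pi_apply t).pow_const 2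
  have hWvec : ∀ m, m ≤ k + 1 → ∀ ω,
      W m (fun t : Fin (k+1) => X ((t : ℕ) + 1) ω) = V2 X m ω := by
    intro m hm ω
    rw [V2_eq_sum_range]
    simp only [hW]
    rw [Finset.sum_filter,
      Fin.sum_univ_eq_sum_range (fun i => if i < m then (X (i+1) ω)^2 else 0) (k+1),
      ← Finset.sum_filter]
    congr 1
    ext i
    simp only [Finset.mem_filter, Finset.mem_range]
    omega
  have hWswap : ∀ (c d : Fin (k+1)) (m : ℕ), (c : ℕ) < m → (d : ℕ) < m →
      ∀ x : Fin (k+1) → ℝ, W m (fun t => x (Equiv.swap c d t)) = W m x := by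
    intro c d m hc hd x
    refine Finset.sum_equiv (Equiv.swap c d) (fun t => ?_) (fun t _ => rfl)
    simp only [Finset.mem_filter, Finset.mem_univ, true_and]
    rcases eq_or_ne t c with rfl | h1
    · rw [Equiv.swap_apply_left]; exact ⟨fun _ => hd, fun _ => hc⟩
    rcases eq_or_ne t d with rfl | h2
    · rw [Equiv.swap_apply_right]; exact ⟨fun _ => hc, fun _ => hd⟩
    · rw [Equiv.swap_apply_of_ne_of_ne h1 h2]
  -- the common integrand factor
  set q : Ω → ℝ := fun ω => (X (k+1) ω)^2 / V2 X (k+1) ω with hq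
  have hqmeas : Measurable q := ((hmeas _).pow_const 2).div (V2_measurable X hmeas _)
  have hq01 : ∀ ω, 0 ≤ q ω ∧ q ω ≤ 1 :=
    fun ω => sq_div_V2_mem X (by omega) (by omega) ω
  set τ : Fin (k+1) → ℕ := fun t => (t : ℕ) + 1 with hτ
  have hτinj : Function.Injective τ :=
    fun t₁ t₂ h => Fin.val_injective (Nat.succ_injective h)
  -- step A
  set F : (Fin (k+1) → ℝ) → ℝ :=
    fun x => (x a)^2 / W (j+1) x * ((x b)^2 / W (k+1) x) with hF
  have hFmeas : Measurable F :=
    (((measurable_pi_apply a).pow_const 2).div (hWmeas _)).mul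
      (((measurable_pi_apply b).pow_const 2).div (hWmeas _))
  have hA : ∀ i : ℕ, i ≤ j →
      ∫ ω, (X (i+1) ω)^2 / V2 X (j+1) ω * q ω ∂μ
        = ∫ ω, F (fun t : Fin (k+1) => X (τ t) ω) ∂μ := by
    intro i hi
    have hc : i < k + 1 := by omega
    set c : Fin (k+1) := ⟨i, hc⟩ with hcdef
    set σ : Fin (k+1) → ℕ := fun t => ((Equiv.swap a c t : Fin (k+1)) : ℕ) + 1 with hσ
    have hσinj : Function.Injective σ := fun t₁ t₂ h =>
      (Equiv.swap a c).injective (Fin.val_injective (Nat.succ_injective h))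
    have hpt : ∀ ω, F (fun t => X (σ t) ω) = (X (i+1) ω)^2 / V2 X (j+1) ω * q ω := by
      intro ω
      have hvec : (fun t : Fin (k+1) => X (σ t) ω)
          = fun t => (fun t' : Fin (k+1) => X ((t' : ℕ) + 1) ω) (Equiv.swap a c t) := rfl
      simp only [hF, hvec]
      rw [hWswap a c (j+1) (by simp [ha]) (by simp [hcdef]; omega)
            (fun t' : Fin (k+1) => X ((t' : ℕ) + 1) ω),
          hWswap a c (k+1) (by simp [ha]; omega) (by simp [hcdef]; omega)
            (fun t' : Fin (k+1) => X ((t' : ℕ) + 1) ω),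
          hWvec (j+1) (by omega) ω, hWvec (k+1) (by omega) ω]
      have h1 : Equiv.swap a c a = c := Equiv.swap_apply_left a c
      have h2 : Equiv.swap a c b = b := by
        refine Equiv.swap_apply_of_ne_of_ne ?_ ?_
        · simp [hb, ha, Fin.ext_iff]; omega
        · simp [hb, hcdef, Fin.ext_iff]; omega
      rw [h1, h2]
    calc ∫ ω, (X (i+1) ω)^2 / V2 X (j+1) ω * q ω ∂μ
        = ∫ ω, F (fun t => X (σ t) ω) ∂μ := by
          exact integral_congr_ae (ae_of_all _ fun ω => (hpt ω).symm)
      _ = ∫ ω, F (fun t : Fin (k+1) => X (τ t) ω) ∂μ :=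
          integral_vec' μ X hmeas hiid σ τ hσinj hτinj F hFmeas
  have hAint : ∀ i : ℕ, i ≤ j →
      Integrable (fun ω => (X (i+1) ω)^2 / V2 X (j+1) ω * q ω) μ := by
    intro i hi
    refine (integrable_const (1:ℝ)).mono'
      ((((hmeas _).pow_const 2).div (V2_measurable X hmeas _)).mul hqmeas).aestronglyMeasurable
      (ae_of_all _ fun ω => ?_)
    have h1 := sq_div_V2_mem X (i := i+1) (m := j+1) (by omega) (by omega) ω
    have h2 := hq01 ω
    rw [Real.norm_eq_abs, abs_of_nonneg (mul_nonneg h1.1 h2.1)]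
    calc (X (i+1) ω)^2 / V2 X (j+1) ω * q ω ≤ 1 * 1 :=
          mul_le_mul h1.2 h2.2 h2.1 zero_le_one
      _ = 1 := by ring
  have hsumA : ((j : ℝ) + 1) * (∫ ω, F (fun t : Fin (k+1) => X (τ t) ω) ∂μ)
      = ∫ ω, q ω ∂μ := by
    have e1 : ∑ i ∈ Finset.range (j+1),
        ∫ ω, (X (i+1) ω)^2 / V2 X (j+1) ω * q ω ∂μ
        = ∫ ω, q ω ∂μ := by
      rw [← integral_finset_sum _ (fun i hi => hAint i (by
        have := Finset.mem_range.1 hi; omega))]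
      refine integral_congr_ae ?_
      filter_upwards [V2_pos_ae μ X (hzero 1) (show 1 ≤ j+1 by omega)] with ω hω
      rw [← Finset.sum_mul, ← Finset.sum_div, ← V2_eq_sum_range,
        div_self (ne_of_gt hω), one_mul]
    have e2 : ∑ i ∈ Finset.range (j+1),
        ∫ ω, (X (i+1) ω)^2 / V2 X (j+1) ω * q ω ∂μ
        = ((j : ℝ) + 1) * (∫ ω, F (fun t : Fin (k+1) => X (τ t) ω) ∂μ) := by
      rw [Finset.sum_congr rfl (fun i hi => hA i (by
        have := Finset.mem_range.1 hi; omega))]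
      rw [Finset.sum_const, Finset.card_range, nsmul_eq_mul]
      push_cast
      ring
    rw [← e2, e1]
  -- step B
  set G : (Fin (k+1) → ℝ) → ℝ := fun x => (x b)^2 / W (k+1) x with hG
  have hGmeas : Measurable G :=
    ((measurable_pi_apply b).pow_const 2).div (hWmeas _)
  have hB : ∀ i : ℕ, i ≤ k →
      ∫ ω, (X (i+1) ω)^2 / V2 X (k+1) ω ∂μ
        = ∫ ω, G (fun t : Fin (k+1) => X (τ t) ω) ∂μ := by
    intro i hi
    have hc : i < k + 1 := by omega
    set c : Fin (k+1) := ⟨i, hc⟩ with hcdef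
    set σ : Fin (k+1) → ℕ := fun t => ((Equiv.swap b c t : Fin (k+1)) : ℕ) + 1 with hσ
    have hσinj : Function.Injective σ := fun t₁ t₂ h =>
      (Equiv.swap b c).injective (Fin.val_injective (Nat.succ_injective h))
    have hpt : ∀ ω, G (fun t => X (σ t) ω) = (X (i+1) ω)^2 / V2 X (k+1) ω := by
      intro ω
      have hvec : (fun t : Fin (k+1) => X (σ t) ω)
          = fun t => (fun t' : Fin (k+1) => X ((t' : ℕ) + 1) ω) (Equiv.swap b c t) := rfl
      simp only [hG, hvec]
      rw [hWswap b c (k+1) b.isLt c.isLt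
            (fun t' : Fin (k+1) => X ((t' : ℕ) + 1) ω),
          hWvec (k+1) (by omega) ω]
      rw [Equiv.swap_apply_left b c]
    calc ∫ ω, (X (i+1) ω)^2 / V2 X (k+1) ω ∂μ
        = ∫ ω, G (fun t => X (σ t) ω) ∂μ := by
          exact integral_congr_ae (ae_of_all _ fun ω => (hpt ω).symm)
      _ = ∫ ω, G (fun t : Fin (k+1) => X (τ t) ω) ∂μ :=
          integral_vec' μ X hmeas hiid σ τ hσinj hτinj G hGmeas
  have hBint : ∀ i : ℕ, i ≤ k →
      Integrable (fun ω => (X (i+1) ω)^2 / V2 X (k+1) ω) μ := by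
    intro i hi
    refine (integrable_const (1:ℝ)).mono'
      (((hmeas _).pow_const 2).div (V2_measurable X hmeas _)).aestronglyMeasurable
      (ae_of_all _ fun ω => ?_)
    have h1 := sq_div_V2_mem X (i := i+1) (m := k+1) (by omega) (by omega) ω
    rw [Real.norm_eq_abs, abs_of_nonneg h1.1]
    exact h1.2
  have hsumB : ((k : ℝ) + 1) * (∫ ω, G (fun t : Fin (k+1) => X (τ t) ω) ∂μ) = 1 := by
    have e1 : ∑ i ∈ Finset.range (k+1),
        ∫ ω, (X (i+1) ω)^2 / V2 X (k+1) ω ∂μ = 1 := by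
      rw [← integral_finset_sum _ (fun i hi => hBint i (by
        have := Finset.mem_range.1 hi; omega))]
      have : ∫ (_ : Ω), (1:ℝ) ∂μ = 1 := by simp
      rw [← this]
      refine integral_congr_ae ?_
      filter_upwards [V2_pos_ae μ X (hzero 1) (show 1 ≤ k+1 by omega)] with ω hω
      rw [← Finset.sum_div, ← V2_eq_sum_range, div_self (ne_of_gt hω)]
    have e2 : ∑ i ∈ Finset.range (k+1),
        ∫ ω, (X (i+1) ω)^2 / V2 X (k+1) ω ∂μ
        = ((k : ℝ) + 1) * (∫ ω, G (fun t : Fin (k+1) => X (τ t) ω) ∂μ) := by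
      rw [Finset.sum_congr rfl (fun i hi => hB i (by
        have := Finset.mem_range.1 hi; omega))]
      rw [Finset.sum_const, Finset.card_range, nsmul_eq_mul]
      push_cast
      ring
    rw [← e2, e1]
  -- conclude
  have hqB : ∫ ω, q ω ∂μ = ∫ ω, G (fun t : Fin (k+1) => X (τ t) ω) ∂μ := hB k le_rfl
  have hAj := hA j le_rfl
  have htarget : ∫ ω, ((X (j+1) ω)^2 / V2 X (j+1) ω) * ((X (k+1) ω)^2 / V2 X (k+1) ω) ∂μ
      = ∫ ω, F (fun t : Fin (k+1) => X (τ t) ω) ∂μ := hAj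
  rw [htarget, eq_div_iff (by positivity)]
  rw [hqB] at hsumA
  linear_combination ((k : ℝ) + 1) * hsumA + hsumB
end
end

section
/- Let X_1, X_2, ... be real random variables with V_j > 0 a.s., and define Y_j = S_j/V_j as above. Then for all n \le k, |Y_k - Y_n| \le \sum_{j=n}^{k-1} (X_{j+1}^2 / (V_{j+1}(V_j + V_{j+1}))) |Y_j| + |\sum_{j=n}^{k-1} X_{j+1}/V_{j+1}|, and consequently sup_{n \le k \le l+1} |Y_k - Y_n| \le \sum_{j=n}^{l} (X_{j+1}^2/(V_{j+1}(V_j + V_{j+1}))) |Y_j| + sup_{n \le k \le l} |\sum_{j=n}^{k} X_{j+1}/V_{j+1}|. -/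
open MeasureTheory ProbabilityTheory Filter

noncomputable section

lemma key_frac (a b s x : ℝ) (ha : 0 < a) (hb : 0 < b) (hx : x^2 = b^2 - a^2) :
    (s + x)/b - s/a = -(s/a) * (x^2/(b*(a+b))) + x/b := by
  rw [hx]
  have hab : a + b ≠ 0 := by positivity
  field_simp
  ring

lemma telescope (f : ℕ → ℝ) {n k : ℕ} (h : n ≤ k) :
    ∑ j ∈ Finset.Ico n k, (f (j+1) - f j) = f k - f n := by
  induction k, h using Nat.le_induction with
  | base => simp
  | succ k hk ih =>
    rw [Finset.sum_Ico_succ_top hk, ih]; ring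

/-- Telescoping bound for increments of self-normalized sums, and the resulting bound
on the running supremum. -/
theorem stmt4 {Ω : Type*} [MeasurableSpace Ω] (μ : Measure Ω) [IsProbabilityMeasure μ]
    (X : ℕ → Ω → ℝ)
    (hmeas : ∀ i, Measurable (X i))
    (hV : ∀ j, 1 ≤ j → ∀ᵐ ω ∂μ, 0 < V X j ω) :
    ∀ᵐ ω ∂μ,
      (∀ n k : ℕ, 1 ≤ n → n ≤ k →
        |Ysn X k ω - Ysn X n ω|
          ≤ (∑ j ∈ Finset.Ico n k,
              (X (j+1) ω)^2 / (V X (j+1) ω * (V X j ω + V X (j+1) ω)) * |Ysn X j ω|)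
            + |∑ j ∈ Finset.Ico n k, X (j+1) ω / V X (j+1) ω|)
      ∧ ∀ (n l : ℕ) (hn : 1 ≤ n) (hnl : n ≤ l),
        (Finset.Icc n (l+1)).sup' (Finset.nonempty_Icc.mpr (by omega))
            (fun k => |Ysn X k ω - Ysn X n ω|)
          ≤ (∑ j ∈ Finset.Icc n l,
              (X (j+1) ω)^2 / (V X (j+1) ω * (V X j ω + V X (j+1) ω)) * |Ysn X j ω|)
            + (Finset.Icc n l).sup' (Finset.nonempty_Icc.mpr hnl)
                (fun k => |∑ j ∈ Finset.Icc n k, X (j+1) ω / V X (j+1) ω|) := by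

  have hae : ∀ᵐ ω ∂μ, ∀ j, 1 ≤ j → 0 < V X j ω := by
    rw [MeasureTheory.ae_all_iff]
    intro j
    by_cases hj : 1 ≤ j
    · filter_upwards [hV j hj] with ω h _; exact h
    · filter_upwards with ω h; omega
  filter_upwards [hae] with ω hv
  -- basic facts
  have hV2 : ∀ j, (V X j ω)^2 = V2 X j ω := by
    intro j
    rw [V, Real.sq_sqrt]
    exact Finset.sum_nonneg (fun i _ => sq_nonneg _)
  have hstep : ∀ j, 1 ≤ j →
      Ysn X (j+1) ω - Ysn X j ω
        = -(Ysn X j ω) * ((X (j+1) ω)^2 / (V X (j+1) ω * (V X j ω + V X (j+1) ω)))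
          + X (j+1) ω / V X (j+1) ω := by
    intro j hj
    have hS : S X (j+1) ω = S X j ω + X (j+1) ω := by
      rw [S, S, Finset.sum_Icc_succ_top (by omega)]
    have hx : (X (j+1) ω)^2 = (V X (j+1) ω)^2 - (V X j ω)^2 := by
      rw [hV2, hV2, V2, V2, Finset.sum_Icc_succ_top (by omega : 1 ≤ j+1)]
      ring
    rw [Ysn, Ysn, hS]
    exact key_frac _ _ _ _ (hv j hj) (hv (j+1) (by omega)) hx
  have part1 : ∀ n k : ℕ, 1 ≤ n → n ≤ k →
      |Ysn X k ω - Ysn X n ω|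
        ≤ (∑ j ∈ Finset.Ico n k,
            (X (j+1) ω)^2 / (V X (j+1) ω * (V X j ω + V X (j+1) ω)) * |Ysn X j ω|)
          + |∑ j ∈ Finset.Ico n k, X (j+1) ω / V X (j+1) ω| := by
    intro n k hn hnk
    have heq : Ysn X k ω - Ysn X n ω
        = (∑ j ∈ Finset.Ico n k,
            -(Ysn X j ω) * ((X (j+1) ω)^2 / (V X (j+1) ω * (V X j ω + V X (j+1) ω))))
          + ∑ j ∈ Finset.Ico n k, X (j+1) ω / V X (j+1) ω := by
      rw [← Finset.sum_add_distrib, ← telescope (fun j => Ysn X j ω) hnk]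
      apply Finset.sum_congr rfl
      intro j hj
      simp only [Finset.mem_Ico] at hj
      exact hstep j (by omega)
    rw [heq]
    refine (abs_add_le _ _).trans (add_le_add_left ?_ _)
    refine (Finset.abs_sum_le_sum_abs _ _).trans ?_
    apply Finset.sum_le_sum
    intro j hj
    simp only [Finset.mem_Ico] at hj
    have hc : 0 ≤ (X (j+1) ω)^2 / (V X (j+1) ω * (V X j ω + V X (j+1) ω)) := by
      have h1 := hv j (by omega)
      have h2 := hv (j+1) (by omega)
      positivity
    rw [abs_mul, abs_neg, abs_of_nonneg hc]
    rw [mul_comm]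
  refine ⟨part1, ?_⟩
  intro n l hn hnl
  apply Finset.sup'_le
  intro k hk
  simp only [Finset.mem_Icc] at hk
  rcases eq_or_lt_of_le hk.1 with h | h
  · subst h
    simp only [sub_self, abs_zero]
    apply add_nonneg
    · apply Finset.sum_nonneg
      intro j hj
      simp only [Finset.mem_Icc] at hj
      have h1 := hv j (by omega)
      have h2 := hv (j+1) (by omega)
      positivity
    · exact le_trans (abs_nonneg _)
        (Finset.le_sup' (fun k => |∑ j ∈ Finset.Icc n k, X (j+1) ω / V X (j+1) ω|)
          (Finset.mem_Icc.mpr ⟨le_refl n, hnl⟩))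
  · refine (part1 n k hn (le_of_lt h)).trans (add_le_add ?_ ?_)
    · apply Finset.sum_le_sum_of_subset_of_nonneg
      · intro j hj
        simp only [Finset.mem_Ico] at hj
        simp only [Finset.mem_Icc]
        omega
      · intro j hj _
        simp only [Finset.mem_Icc] at hj
        have h1 := hv j (by omega)
        have h2 := hv (j+1) (by omega)
        positivity
    · have hk1 : k - 1 ∈ Finset.Icc n l := Finset.mem_Icc.mpr ⟨by omega, by omega⟩
      have : Finset.Ico n k = Finset.Icc n (k-1) := by
        rw [← Finset.Ico_add_one_right_eq_Icc]
        congr 1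
        omega
      rw [this]
      exact Finset.le_sup' (fun k => |∑ j ∈ Finset.Icc n k, X (j+1) ω / V X (j+1) ω|) hk1
end
end

section
/- Let X_1, X_2, ... be i.i.d. symmetric real random variables with P(X_i=0)=0, V_m^2 = \sum_{i=1}^m X_i^2, Y_j = S_j/V_j. Then for j < k: E[(X_{j+1}^2/V_{j+1}^2)(X_{k+1}^2/V_{k+1}^2) |Y_j| |Y_k|] \le E[(X_{j+1}^2/V_{j+1}^2)(X_{k+1}^2/V_{k+1}^2)] = 1/((j+1)(k+1)). -/
open MeasureTheory ProbabilityTheory Filter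

noncomputable section

namespace Stmt7Aux

variable {N : ℕ}

def dd (A : Finset (Fin N)) (x : Fin N → ℝ) : ℝ := ∑ i ∈ A, (x i)^2
def ss (A : Finset (Fin N)) (x : Fin N → ℝ) : ℝ := ∑ i ∈ A, x i
def flip (a : Fin N) (x : Fin N → ℝ) : Fin N → ℝ := fun i => if i = a then -(x i) else x i

lemma dd_nonneg (A : Finset (Fin N)) (x : Fin N → ℝ) : 0 ≤ dd A x :=
  Finset.sum_nonneg fun _ _ => sq_nonneg _

lemma sq_le_dd {A : Finset (Fin N)} {a : Fin N} (ha : a ∈ A) (x : Fin N → ℝ) :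
    (x a)^2 ≤ dd A x :=
  Finset.single_le_sum (fun i _ => sq_nonneg (x i)) ha

lemma abs_le_sqrt_dd {A : Finset (Fin N)} {a : Fin N} (ha : a ∈ A) (x : Fin N → ℝ) :
    |x a| ≤ Real.sqrt (dd A x) := by
  rw [← Real.sqrt_sq_eq_abs]
  exact Real.sqrt_le_sqrt (sq_le_dd ha x)

lemma ratio_nonneg (A : Finset (Fin N)) (a : Fin N) (x : Fin N → ℝ) :
    0 ≤ (x a)^2 / dd A x := div_nonneg (sq_nonneg _) (dd_nonneg A x)

lemma ratio_le_one {A : Finset (Fin N)} {a : Fin N} (ha : a ∈ A) (x : Fin N → ℝ) :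
    (x a)^2 / dd A x ≤ 1 :=
  div_le_one_of_le₀ (sq_le_dd ha x) (dd_nonneg A x)

lemma prod_ratio_le_one {A : Finset (Fin N)} {a b : Fin N} (ha : a ∈ A) (hb : b ∈ A)
    (x : Fin N → ℝ) : |x a * x b / dd A x| ≤ 1 := by
  have h1 : |x a * x b| ≤ dd A x := by
    rw [abs_mul]
    calc |x a| * |x b| ≤ Real.sqrt (dd A x) * Real.sqrt (dd A x) :=
          mul_le_mul (abs_le_sqrt_dd ha x) (abs_le_sqrt_dd hb x) (abs_nonneg _)
            (Real.sqrt_nonneg _)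
      _ = dd A x := Real.mul_self_sqrt (dd_nonneg A x)
  rw [abs_div, abs_of_nonneg (dd_nonneg A x)]
  exact div_le_one_of_le₀ h1 (dd_nonneg A x)

lemma flip_apply_self (a : Fin N) (x : Fin N → ℝ) : flip a x a = -(x a) := if_pos rfl

lemma flip_apply_ne {a b : Fin N} (h : b ≠ a) (x : Fin N → ℝ) : flip a x b = x b := if_neg h

lemma flip_flip (a : Fin N) (x : Fin N → ℝ) : flip a (flip a x) = x := by
  funext i
  simp only [flip]
  split_ifs with h <;> simp

lemma measurable_flip (a : Fin N) : Measurable (flip (N := N) a) := by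
  rw [measurable_pi_iff]
  intro i
  simp only [flip]
  split_ifs with h
  · exact (measurable_pi_apply i).neg
  · exact measurable_pi_apply i

lemma dd_flip (A : Finset (Fin N)) (a : Fin N) (x : Fin N → ℝ) :
    dd A (flip a x) = dd A x := by
  refine Finset.sum_congr rfl fun i _ => ?_
  simp only [flip]
  split_ifs with h <;> ring

lemma measurable_dd (A : Finset (Fin N)) : Measurable (dd A) :=
  Finset.measurable_sum _ fun i _ => (measurable_pi_apply i).pow measurable_const

lemma measurable_ss (A : Finset (Fin N)) : Measurable (ss A) :=
  Finset.measurable_sum _ fun i _ => measurable_pi_apply i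

def flipE (a : Fin N) : (Fin N → ℝ) ≃ᵐ (Fin N → ℝ) where
  toFun := flip a
  invFun := flip a
  left_inv := flip_flip a
  right_inv := flip_flip a
  measurable_toFun := measurable_flip a
  measurable_invFun := measurable_flip a

lemma abs_Y_le (A : Finset (Fin N)) (x : Fin N → ℝ) :
    |ss A x / Real.sqrt (dd A x)| ≤ A.card := by
  by_cases h : Real.sqrt (dd A x) = 0
  · simp [h]
  · have h' : 0 < Real.sqrt (dd A x) :=
      lt_of_le_of_ne (Real.sqrt_nonneg _) (Ne.symm h)
    rw [abs_div, abs_of_pos h', div_le_iff₀ h']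
    calc |ss A x| ≤ ∑ i ∈ A, |x i| := Finset.abs_sum_le_sum_abs _ _
      _ ≤ ∑ _i ∈ A, Real.sqrt (dd A x) :=
          Finset.sum_le_sum fun i hi => abs_le_sqrt_dd hi x
      _ = A.card * Real.sqrt (dd A x) := by
          rw [Finset.sum_const, nsmul_eq_mul]

variable (ν : Measure ℝ) [IsProbabilityMeasure ν]

lemma mp_flip (hsym : Measure.map Neg.neg ν = ν) (a : Fin N) :
    MeasurePreserving (flip a) (Measure.pi fun _ : Fin N => ν)
      (Measure.pi fun _ : Fin N => ν) := by
  have h : ∀ i : Fin N, MeasurePreserving (fun y : ℝ => if i = a then -y else y) ν ν := by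
    intro i
    split_ifs with h
    · exact ⟨measurable_neg, hsym⟩
    · exact MeasurePreserving.id ν
  exact MeasureTheory.measurePreserving_pi _ _ h

lemma integral_comp_perm (τ : Equiv.Perm (Fin N)) (f : (Fin N → ℝ) → ℝ) :
    ∫ x, f (x ∘ τ) ∂(Measure.pi fun _ : Fin N => ν)
      = ∫ x, f x ∂(Measure.pi fun _ : Fin N => ν) := by
  have h := MeasureTheory.measurePreserving_piCongrLeft (fun _ : Fin N => ν) τ.symm
  have h2 := h.integral_comp
    (MeasurableEquiv.piCongrLeft (fun _ : Fin N => ℝ) τ.symm).measurableEmbedding f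
  have h3 : ∀ x : Fin N → ℝ,
      (MeasurableEquiv.piCongrLeft (fun _ : Fin N => ℝ) τ.symm) x = x ∘ τ := by
    intro x
    funext i
    have := MeasurableEquiv.piCongrLeft_apply_apply (β := fun _ : Fin N => ℝ) τ.symm x (τ i)
    simpa using this
  simp only [h3] at h2
  exact h2

lemma dd_pos_ae (hν0 : ν ({0} : Set ℝ) = 0) (A : Finset (Fin N)) (hA : A.Nonempty) :
    ∀ᵐ x ∂(Measure.pi fun _ : Fin N => ν), 0 < dd A x := by
  obtain ⟨i₀, hi₀⟩ := hA
  rw [ae_iff]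
  refine measure_mono_null ?_ (Measure.pi_eval_preimage_null (μ := fun _ : Fin N => ν) (i := i₀) (s := ({0} : Set ℝ)) hν0)
  intro x hx
  simp only [Set.mem_setOf_eq, not_lt] at hx
  have h0 : dd A x = 0 :=
    le_antisymm hx (Finset.sum_nonneg fun _ _ => sq_nonneg _)
  have := (Finset.sum_eq_zero_iff_of_nonneg (fun i _ => sq_nonneg (x i))).1 h0 i₀ hi₀
  have : x i₀ = 0 := by
    have := sq_eq_zero_iff.mp this
    exact this
  simpa [Function.eval] using this

lemma integrable_of_bounded {f : (Fin N → ℝ) → ℝ} (hf : Measurable f) (C : ℝ)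
    (h : ∀ x, |f x| ≤ C) : Integrable f (Measure.pi fun _ : Fin N => ν) :=
  (integrable_const C).mono' hf.aestronglyMeasurable (ae_of_all _ fun x => by
    simpa using h x)

lemma integral_flip_zero (hsym : Measure.map Neg.neg ν = ν) (a : Fin N)
    (f : (Fin N → ℝ) → ℝ) (hodd : ∀ x, f (flip a x) = -f x) :
    ∫ x, f x ∂(Measure.pi fun _ : Fin N => ν) = 0 := by
  have h1 : ∫ x, f (flip a x) ∂(Measure.pi fun _ : Fin N => ν)
      = ∫ x, f x ∂(Measure.pi fun _ : Fin N => ν) :=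
    (mp_flip ν hsym a).integral_comp (flipE a).measurableEmbedding f
  have h2 : ∫ x, f (flip a x) ∂(Measure.pi fun _ : Fin N => ν)
      = - ∫ x, f x ∂(Measure.pi fun _ : Fin N => ν) := by
    simp_rw [hodd]
    exact integral_neg f
  rw [h2] at h1
  linarith

lemma weighted_eq (hsym : Measure.map Neg.neg ν = ν) (hν0 : ν ({0} : Set ℝ) = 0)
    {W : (Fin N → ℝ) → ℝ} (hWm : Measurable W) (hW0 : ∀ x, 0 ≤ W x) (hW1 : ∀ x, W x ≤ 1)
    (heven : ∀ a x, W (flip a x) = W x)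
    (A : Finset (Fin N)) (hA : A.Nonempty) :
    ∫ x, W x * ((ss A x)^2 / dd A x) ∂(Measure.pi fun _ : Fin N => ν)
      = ∫ x, W x ∂(Measure.pi fun _ : Fin N => ν) := by
  set π : Measure (Fin N → ℝ) := Measure.pi fun _ : Fin N => ν with hπ
  have habsW : ∀ x, |W x| ≤ 1 := fun x => abs_le.2 ⟨by linarith [hW0 x], hW1 x⟩
  have hterm : ∀ a ∈ A, ∀ b ∈ A,
      Integrable (fun x => W x * (x a * x b / dd A x)) π := by
    intro a ha b hb
    refine integrable_of_bounded ν ?_ 1 ?_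
    · exact hWm.mul ((((measurable_pi_apply a).mul (measurable_pi_apply b))).div
        (measurable_dd A))
    · intro x
      rw [abs_mul]
      calc |W x| * |x a * x b / dd A x| ≤ 1 * 1 :=
            mul_le_mul (habsW x) (prod_ratio_le_one ha hb x) (abs_nonneg _) zero_le_one
        _ = 1 := mul_one 1
  have expand : ∀ x, W x * ((ss A x)^2 / dd A x)
      = ∑ a ∈ A, ∑ b ∈ A, W x * (x a * x b / dd A x) := by
    intro x
    rw [pow_two, ss, Finset.sum_mul_sum, Finset.sum_div, Finset.mul_sum]
    refine Finset.sum_congr rfl fun a _ => ?_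
    rw [Finset.sum_div, Finset.mul_sum]
  calc ∫ x, W x * ((ss A x)^2 / dd A x) ∂π
      = ∫ x, ∑ a ∈ A, ∑ b ∈ A, W x * (x a * x b / dd A x) ∂π := by
        simp_rw [expand]
    _ = ∑ a ∈ A, ∫ x, ∑ b ∈ A, W x * (x a * x b / dd A x) ∂π := by
        refine integral_finset_sum A fun a ha => ?_
        exact integrable_finset_sum A fun b hb => hterm a ha b hb
    _ = ∑ a ∈ A, ∑ b ∈ A, ∫ x, W x * (x a * x b / dd A x) ∂π := by
        refine Finset.sum_congr rfl fun a ha => ?_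
        exact integral_finset_sum A fun b hb => hterm a ha b hb
    _ = ∑ a ∈ A, ∫ x, W x * (x a * x a / dd A x) ∂π := by
        refine Finset.sum_congr rfl fun a ha => ?_
        refine Finset.sum_eq_single_of_mem a ha fun b hb hba => ?_
        refine integral_flip_zero ν hsym b _ fun x => ?_
        rw [heven b x, dd_flip, flip_apply_self, flip_apply_ne hba.symm]
        ring
    _ = ∫ x, ∑ a ∈ A, W x * (x a * x a / dd A x) ∂π :=
        (integral_finset_sum A fun a ha => hterm a ha a ha).symm
    _ = ∫ x, W x ∂π := by
        refine integral_congr_ae ?_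
        filter_upwards [dd_pos_ae ν hν0 A hA] with x hx
        have : ∑ a ∈ A, W x * (x a * x a / dd A x)
            = W x * ((∑ a ∈ A, (x a)^2) / dd A x) := by
          rw [Finset.sum_div, Finset.mul_sum]
          refine Finset.sum_congr rfl fun a _ => ?_
          ring
        rw [this]
        rw [show (∑ a ∈ A, (x a)^2) = dd A x from rfl, div_self (ne_of_gt hx), mul_one]

lemma swap_sum_sq (A : Finset (Fin N)) {J a : Fin N} (hJ : J ∈ A) (ha : a ∈ A)
    (x : Fin N → ℝ) : dd A (x ∘ Equiv.swap J a) = dd A x := by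
  refine Equiv.Perm.sum_comp (Equiv.swap J a) A (fun i => (x i)^2) ?_
  intro i hi
  simp only [Set.mem_setOf_eq] at hi
  rcases Equiv.swap_apply_ne_self_iff.mp hi with ⟨-, h | h⟩ <;> subst h <;> assumption

lemma integrable_ratio_prod (A B : Finset (Fin N)) {J K : Fin N} (hJ : J ∈ A) (hK : K ∈ B) :
    Integrable (fun x : Fin N → ℝ => ((x J)^2 / dd A x) * ((x K)^2 / dd B x))
      (Measure.pi fun _ : Fin N => ν) := by
  refine integrable_of_bounded ν ?_ 1 ?_
  · exact (((measurable_pi_apply J).pow measurable_const).div (measurable_dd A)).mul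
      (((measurable_pi_apply K).pow measurable_const).div (measurable_dd B))
  · intro x
    rw [abs_mul]
    calc |(x J)^2 / dd A x| * |(x K)^2 / dd B x| ≤ 1 * 1 := by
          refine mul_le_mul ?_ ?_ (abs_nonneg _) zero_le_one <;>
            rw [abs_of_nonneg (ratio_nonneg _ _ _)]
          · exact ratio_le_one hJ x
          · exact ratio_le_one hK x
      _ = 1 := mul_one 1

lemma sum_ratio_value (hν0 : ν ({0} : Set ℝ) = 0)
    {B : Finset (Fin N)} {K : Fin N} (hK : K ∈ B)
    {G : (Fin N → ℝ) → ℝ} (hGm : Measurable G) (hG0 : ∀ x, 0 ≤ G x) (hG1 : ∀ x, G x ≤ 1)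
    (hGswap : ∀ b ∈ B, ∀ x, G (x ∘ Equiv.swap K b) = G x) :
    (B.card : ℝ) * ∫ x, ((x K)^2 / dd B x) * G x ∂(Measure.pi fun _ : Fin N => ν)
      = ∫ x, G x ∂(Measure.pi fun _ : Fin N => ν) := by
  set π : Measure (Fin N → ℝ) := Measure.pi fun _ : Fin N => ν with hπ
  have hint : ∀ b ∈ B, Integrable (fun x => ((x b)^2 / dd B x) * G x) π := by
    intro b hb
    refine integrable_of_bounded ν ?_ 1 ?_
    · exact (((measurable_pi_apply b).pow measurable_const).div (measurable_dd B)).mul hGm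
    · intro x
      rw [abs_mul, abs_of_nonneg (ratio_nonneg _ _ _),
        abs_of_nonneg (hG0 x)]
      calc ((x b)^2 / dd B x) * G x ≤ 1 * 1 :=
            mul_le_mul (ratio_le_one hb x) (hG1 x) (hG0 x) zero_le_one
        _ = 1 := mul_one 1
  have hswap : ∀ b ∈ B,
      ∫ x, ((x K)^2 / dd B x) * G x ∂π = ∫ x, ((x b)^2 / dd B x) * G x ∂π := by
    intro b hb
    have := integral_comp_perm (N := N) ν (Equiv.swap K b)
      (fun x => ((x K)^2 / dd B x) * G x)
    rw [← this]
    refine integral_congr_ae (ae_of_all _ fun x => ?_)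
    dsimp only
    have h1 : x (Equiv.swap K b K) = x b := by
      rw [Equiv.swap_apply_left]
    rw [show ((x ∘ Equiv.swap K b) K) = x (Equiv.swap K b K) from rfl, h1,
      swap_sum_sq B hK hb, hGswap b hb]
  calc (B.card : ℝ) * ∫ x, ((x K)^2 / dd B x) * G x ∂π
      = ∑ b ∈ B, ∫ x, ((x b)^2 / dd B x) * G x ∂π := by
        rw [Finset.sum_congr rfl (fun b hb => (hswap b hb).symm), Finset.sum_const,
          nsmul_eq_mul]
    _ = ∫ x, ∑ b ∈ B, ((x b)^2 / dd B x) * G x ∂π :=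
        (integral_finset_sum B hint).symm
    _ = ∫ x, G x ∂π := by
        refine integral_congr_ae ?_
        filter_upwards [dd_pos_ae ν hν0 B ⟨K, hK⟩] with x hx
        rw [← Finset.sum_mul, ← Finset.sum_div,
          show (∑ b ∈ B, (x b)^2) = dd B x from rfl, div_self (ne_of_gt hx), one_mul]

lemma ratio_value (hν0 : ν ({0} : Set ℝ) = 0)
    {A B : Finset (Fin N)} (hAB : A ⊆ B) {J K : Fin N} (hJ : J ∈ A) (hK : K ∈ B)
    (hKA : K ∉ A) :
    ∫ x, ((x J)^2 / dd A x) * ((x K)^2 / dd B x) ∂(Measure.pi fun _ : Fin N => ν)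
      = 1 / ((A.card : ℝ) * (B.card : ℝ)) := by
  set π : Measure (Fin N → ℝ) := Measure.pi fun _ : Fin N => ν with hπ
  have hG : ∀ a ∈ A, ∀ x : Fin N → ℝ,
      ((fun y => (y K)^2 / dd B y) (x ∘ Equiv.swap J a)) = (x K)^2 / dd B x := by
    intro a ha x
    have hKfix : Equiv.swap J a K = K :=
      Equiv.swap_apply_of_ne_of_ne (fun h => hKA (h ▸ hJ)) (fun h => hKA (h ▸ ha))
    show (x (Equiv.swap J a K))^2 / dd B (x ∘ Equiv.swap J a) = (x K)^2 / dd B x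
    rw [hKfix, swap_sum_sq B (hAB hJ) (hAB ha)]
  -- step 1: A.card * ∫ = ∫ (x K)^2/dd B
  have step1 : (A.card : ℝ) * ∫ x, ((x J)^2 / dd A x) * ((x K)^2 / dd B x) ∂π
      = ∫ x, (x K)^2 / dd B x ∂π := by
    have hswap : ∀ a ∈ A,
        ∫ x, ((x J)^2 / dd A x) * ((x K)^2 / dd B x) ∂π
          = ∫ x, ((x a)^2 / dd A x) * ((x K)^2 / dd B x) ∂π := by
      intro a ha
      have := integral_comp_perm (N := N) ν (Equiv.swap J a)
        (fun x => ((x J)^2 / dd A x) * ((x K)^2 / dd B x))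
      rw [← this]
      refine integral_congr_ae (ae_of_all _ fun x => ?_)
      dsimp only
      have h1 : x (Equiv.swap J a J) = x a := by
        rw [Equiv.swap_apply_left]
      have h2 := hG a ha x
      dsimp only at h2
      rw [show ((x ∘ Equiv.swap J a) J) = x (Equiv.swap J a J) from rfl, h1,
        swap_sum_sq A hJ ha, h2]
    calc (A.card : ℝ) * ∫ x, ((x J)^2 / dd A x) * ((x K)^2 / dd B x) ∂π
        = ∑ a ∈ A, ∫ x, ((x a)^2 / dd A x) * ((x K)^2 / dd B x) ∂π := by
          rw [Finset.sum_congr rfl (fun a ha => (hswap a ha).symm), Finset.sum_const,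
            nsmul_eq_mul]
      _ = ∫ x, ∑ a ∈ A, ((x a)^2 / dd A x) * ((x K)^2 / dd B x) ∂π :=
          (integral_finset_sum A fun a ha => integrable_ratio_prod ν A B ha hK).symm
      _ = ∫ x, (x K)^2 / dd B x ∂π := by
          refine integral_congr_ae ?_
          filter_upwards [dd_pos_ae ν hν0 A ⟨J, hJ⟩] with x hx
          rw [← Finset.sum_mul, ← Finset.sum_div,
            show (∑ a ∈ A, (x a)^2) = dd A x from rfl, div_self (ne_of_gt hx), one_mul]
  have step2 : (B.card : ℝ) * ∫ x, (x K)^2 / dd B x ∂π = 1 := by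
    have := sum_ratio_value (N := N) ν hν0 hK (G := fun _ => (1:ℝ)) measurable_const
      (fun _ => zero_le_one) (fun _ => le_refl 1) (fun _ _ _ => rfl)
    simpa using this
  have hAcard : (0:ℝ) < A.card := by
    exact_mod_cast Finset.card_pos.mpr ⟨J, hJ⟩
  have hBcard : (0:ℝ) < B.card := by
    exact_mod_cast Finset.card_pos.mpr ⟨K, hK⟩
  field_simp at step1 step2 ⊢
  nlinarith [step1, step2]

lemma holder_step (hsym : Measure.map Neg.neg ν = ν) (hν0 : ν ({0} : Set ℝ) = 0)
    {W : (Fin N → ℝ) → ℝ} (hWm : Measurable W) (hW0 : ∀ x, 0 ≤ W x) (hW1 : ∀ x, W x ≤ 1)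
    (heven : ∀ a x, W (flip a x) = W x) (A' B' : Finset (Fin N)) :
    ∫ x, W x * |ss A' x / Real.sqrt (dd A' x)| * |ss B' x / Real.sqrt (dd B' x)|
        ∂(Measure.pi fun _ : Fin N => ν)
      ≤ ∫ x, W x ∂(Measure.pi fun _ : Fin N => ν) := by
  set π : Measure (Fin N → ℝ) := Measure.pi fun _ : Fin N => ν with hπ
  set f : (Fin N → ℝ) → ℝ := fun x => Real.sqrt (W x) * |ss A' x / Real.sqrt (dd A' x)|
    with hf
  set g : (Fin N → ℝ) → ℝ := fun x => Real.sqrt (W x) * |ss B' x / Real.sqrt (dd B' x)|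
    with hg
  have hIW : 0 ≤ ∫ x, W x ∂π := integral_nonneg hW0
  -- squares of f and g
  have hsq : ∀ (C : Finset (Fin N)) (x : Fin N → ℝ),
      (Real.sqrt (W x) * |ss C x / Real.sqrt (dd C x)|)^2
        = W x * ((ss C x)^2 / dd C x) := by
    intro C x
    rw [mul_pow, Real.sq_sqrt (hW0 x), sq_abs, div_pow, Real.sq_sqrt (dd_nonneg C x)]
  -- key bound for each square
  have key : ∀ (C : Finset (Fin N)),
      ∫ x, W x * ((ss C x)^2 / dd C x) ∂π ≤ ∫ x, W x ∂π := by
    intro C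
    rcases C.eq_empty_or_nonempty with h | h
    · subst h
      have : ∀ x : Fin N → ℝ, W x * ((ss ∅ x)^2 / dd ∅ x) = 0 := by
        intro x
        simp [ss]
      rw [integral_congr_ae (ae_of_all _ this), integral_zero]
      exact hIW
    · exact le_of_eq (weighted_eq ν hsym hν0 hWm hW0 hW1 heven C h)
  -- measurability
  have hmf : ∀ (C : Finset (Fin N)),
      Measurable fun x : Fin N → ℝ =>
        Real.sqrt (W x) * |ss C x / Real.sqrt (dd C x)| := by
    intro C
    exact hWm.sqrt.mul ((measurable_ss C).div (measurable_dd C).sqrt).abs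
  -- bounds
  have hbf : ∀ (C : Finset (Fin N)) (x : Fin N → ℝ),
      ‖Real.sqrt (W x) * |ss C x / Real.sqrt (dd C x)|‖ ≤ (C.card : ℝ) := by
    intro C x
    rw [Real.norm_eq_abs, abs_mul, abs_of_nonneg (Real.sqrt_nonneg _), abs_abs]
    calc Real.sqrt (W x) * |ss C x / Real.sqrt (dd C x)| ≤ 1 * (C.card : ℝ) := by
          refine mul_le_mul ?_ (abs_Y_le C x) (abs_nonneg _) zero_le_one
          rw [show (1:ℝ) = Real.sqrt 1 by simp]
          exact Real.sqrt_le_sqrt (hW1 x)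
      _ = (C.card : ℝ) := one_mul _
  have hmem : ∀ (C : Finset (Fin N)),
      MemLp (fun x : Fin N → ℝ => Real.sqrt (W x) * |ss C x / Real.sqrt (dd C x)|)
        (ENNReal.ofReal 2) π :=
    fun C => MemLp.of_bound (hmf C).aestronglyMeasurable (C.card : ℝ)
      (ae_of_all _ (hbf C))
  have hconj : Real.HolderConjugate 2 2 := ⟨by norm_num, by norm_num, by norm_num⟩
  have hHolder := MeasureTheory.integral_mul_le_Lp_mul_Lq_of_nonneg (μ := π) hconj
    (f := f) (g := g) (ae_of_all _ fun x => mul_nonneg (Real.sqrt_nonneg _) (abs_nonneg _))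
    (ae_of_all _ fun x => mul_nonneg (Real.sqrt_nonneg _) (abs_nonneg _))
    (hmem A') (hmem B')
  -- rewrite the LHS of the goal as ∫ f * g
  have hfg : (fun x => W x * |ss A' x / Real.sqrt (dd A' x)|
      * |ss B' x / Real.sqrt (dd B' x)|) = fun x => f x * g x := by
    funext x
    rw [hf, hg]
    dsimp only
    rw [show Real.sqrt (W x) * |ss A' x / Real.sqrt (dd A' x)|
        * (Real.sqrt (W x) * |ss B' x / Real.sqrt (dd B' x)|)
        = Real.sqrt (W x) * Real.sqrt (W x)
          * (|ss A' x / Real.sqrt (dd A' x)| * |ss B' x / Real.sqrt (dd B' x)|) by ring,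
      Real.mul_self_sqrt (hW0 x)]
    ring
  rw [hfg]
  -- rewrite rpow 2 as pow 2 in Hölder
  have hrpow : ∀ h : ℝ, h ^ (2:ℝ) = h ^ (2:ℕ) := fun h => by
    rw [← Real.rpow_natCast h 2]; norm_num
  simp_rw [hrpow] at hHolder
  have hA2 : ∫ x, f x ^ (2:ℕ) ∂π ≤ ∫ x, W x ∂π := by
    calc ∫ x, f x ^ (2:ℕ) ∂π = ∫ x, W x * ((ss A' x)^2 / dd A' x) ∂π := by
          refine integral_congr_ae (ae_of_all _ fun x => ?_)
          exact hsq A' x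
      _ ≤ ∫ x, W x ∂π := key A'
  have hB2 : ∫ x, g x ^ (2:ℕ) ∂π ≤ ∫ x, W x ∂π := by
    calc ∫ x, g x ^ (2:ℕ) ∂π = ∫ x, W x * ((ss B' x)^2 / dd B' x) ∂π := by
          refine integral_congr_ae (ae_of_all _ fun x => ?_)
          exact hsq B' x
      _ ≤ ∫ x, W x ∂π := key B'
  have hA2' : (0:ℝ) ≤ ∫ x, f x ^ (2:ℕ) ∂π :=
    integral_nonneg fun x => by positivity
  have hB2' : (0:ℝ) ≤ ∫ x, g x ^ (2:ℕ) ∂π :=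
    integral_nonneg fun x => by positivity
  calc ∫ x, f x * g x ∂π
      ≤ (∫ x, f x ^ (2:ℕ) ∂π) ^ ((1:ℝ)/2) * (∫ x, g x ^ (2:ℕ) ∂π) ^ ((1:ℝ)/2) := hHolder
    _ ≤ (∫ x, W x ∂π) ^ ((1:ℝ)/2) * (∫ x, W x ∂π) ^ ((1:ℝ)/2) := by
        refine mul_le_mul (Real.rpow_le_rpow hA2' hA2 (by norm_num))
          (Real.rpow_le_rpow hB2' hB2 (by norm_num))
          (Real.rpow_nonneg hB2' _) (Real.rpow_nonneg hIW _)
    _ = ∫ x, W x ∂π := by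
        rw [← Real.sqrt_eq_rpow, Real.mul_self_sqrt hIW]

lemma map_eq_pi {Ω : Type*} [MeasurableSpace Ω] (μ : Measure Ω) [IsProbabilityMeasure μ]
    (X : ℕ → Ω → ℝ) (hmeas : ∀ i, Measurable (X i))
    (hindep : iIndepFun X μ)
    (hident : ∀ i, Measure.map (X i) μ = ν) :
    Measure.map (fun ω (i : Fin N) => X ((i:ℕ)+1) ω) μ
      = Measure.pi (fun _ : Fin N => ν) := by
  have hZ : Measurable (fun ω (i : Fin N) => X ((i:ℕ)+1) ω) :=
    measurable_pi_iff.mpr fun i => hmeas _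
  refine (Measure.pi_eq fun s hs => ?_).symm
  rw [Measure.map_apply hZ (MeasurableSet.univ_pi hs)]
  classical
  set sets : ℕ → Set ℝ := fun n =>
    if h : n - 1 < N ∧ 1 ≤ n then s ⟨n-1, h.1⟩ else Set.univ with hsets
  have hsets_eq : ∀ i : Fin N, sets ((i:ℕ)+1) = s i := by
    intro i
    have h : ((i:ℕ)+1) - 1 < N ∧ 1 ≤ (i:ℕ)+1 := ⟨by simp, le_add_self⟩
    simp only [hsets]
    rw [dif_pos h]
    congr 1
  set Sf : Finset ℕ := Finset.image (fun i : Fin N => (i:ℕ)+1) Finset.univ with hSf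
  have hinj : Function.Injective (fun i : Fin N => (i:ℕ)+1) := by
    intro a b hab
    simpa [Fin.ext_iff] using hab
  have hpre : (fun ω (i : Fin N) => X ((i:ℕ)+1) ω) ⁻¹' Set.pi Set.univ s
      = ⋂ n ∈ Sf, X n ⁻¹' sets n := by
    ext ω
    simp only [Set.mem_preimage, Set.mem_pi, Set.mem_univ, forall_true_left,
      Set.mem_iInter, hSf, Finset.mem_image, Finset.mem_univ, true_and]
    constructor
    · rintro h n ⟨i, rfl⟩
      rw [hsets_eq i]
      exact h i
    · intro h i
      have := h ((i:ℕ)+1) ⟨i, rfl⟩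
      rwa [hsets_eq i] at this
  have hmeas_sets : ∀ n, n ∈ Sf → MeasurableSet (sets n) := by
    intro n hn
    simp only [hsets]
    split_ifs with h
    · exact hs ⟨n-1, h.1⟩
    · exact MeasurableSet.univ
  have hprod := hindep.measure_inter_preimage_eq_mul Sf hmeas_sets
  rw [hpre, hprod, hSf, Finset.prod_image (fun a _ b _ hab => hinj hab)]
  refine Finset.prod_congr rfl fun i _ => ?_
  rw [hsets_eq i, ← hident ((i:ℕ)+1), Measure.map_apply (hmeas _) (hs i)]

lemma sum_Icc_eq (m : ℕ) (hm : m ≤ N) (g : ℕ → ℝ) :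
    ∑ i ∈ Finset.Icc 1 m, g i
      = ∑ i ∈ Finset.univ.filter (fun i : Fin N => (i:ℕ) < m), g ((i:ℕ)+1) := by
  refine Finset.sum_bij' (fun (i : ℕ) (hi : i ∈ Finset.Icc 1 m) =>
      (⟨i - 1, by simp only [Finset.mem_Icc] at hi; omega⟩ : Fin N))
    (fun (i : Fin N) _ => (i:ℕ)+1) ?_ ?_ ?_ ?_ ?_
  · intro a ha
    simp only [Finset.mem_Icc] at ha
    simp only [Finset.mem_filter, Finset.mem_univ, true_and]
    omega
  · intro a ha
    simp only [Finset.mem_filter, Finset.mem_univ, true_and] at ha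
    simp only [Finset.mem_Icc]
    omega
  · intro a ha
    simp only [Finset.mem_Icc] at ha
    simp only [Fin.val_mk]
    omega
  · intro a ha
    exact Fin.ext (by dsimp only; omega)
  · intro a ha
    simp only [Finset.mem_Icc] at ha
    congr 1
    beta_reduce
    simp only [Fin.val_mk]
    omega

lemma card_Am (m : ℕ) (hm : m ≤ N) (hm1 : 1 ≤ m) :
    (((Finset.univ.filter (fun i : Fin N => (i:ℕ) < m))).card : ℝ) = m := by
  have h := sum_Icc_eq (N := N) m hm (fun _ => (1:ℝ))
  simp only [Finset.sum_const, nsmul_eq_mul, mul_one, Nat.card_Icc] at h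
  rw [← h]
  simp

lemma pi_side (hsym : Measure.map Neg.neg ν = ν) (hν0 : ν ({0} : Set ℝ) = 0)
    (j k : ℕ) (hjk : j < k) :
    (∫ x : Fin (k+1) → ℝ,
        ((x ⟨j, by omega⟩)^2 / dd (Finset.univ.filter fun i : Fin (k+1) => (i:ℕ) < j+1) x)
        * ((x ⟨k, by omega⟩)^2 / dd (Finset.univ.filter fun i : Fin (k+1) => (i:ℕ) < k+1) x)
        * |ss (Finset.univ.filter fun i : Fin (k+1) => (i:ℕ) < j) x
            / Real.sqrt (dd (Finset.univ.filter fun i : Fin (k+1) => (i:ℕ) < j) x)|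
        * |ss (Finset.univ.filter fun i : Fin (k+1) => (i:ℕ) < k) x
            / Real.sqrt (dd (Finset.univ.filter fun i : Fin (k+1) => (i:ℕ) < k) x)|
        ∂(Measure.pi fun _ : Fin (k+1) => ν)
      ≤ ∫ x : Fin (k+1) → ℝ,
        ((x ⟨j, by omega⟩)^2 / dd (Finset.univ.filter fun i : Fin (k+1) => (i:ℕ) < j+1) x)
        * ((x ⟨k, by omega⟩)^2 / dd (Finset.univ.filter fun i : Fin (k+1) => (i:ℕ) < k+1) x)
        ∂(Measure.pi fun _ : Fin (k+1) => ν))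
    ∧ ∫ x : Fin (k+1) → ℝ,
        ((x ⟨j, by omega⟩)^2 / dd (Finset.univ.filter fun i : Fin (k+1) => (i:ℕ) < j+1) x)
        * ((x ⟨k, by omega⟩)^2 / dd (Finset.univ.filter fun i : Fin (k+1) => (i:ℕ) < k+1) x)
        ∂(Measure.pi fun _ : Fin (k+1) => ν)
      = 1 / (((j:ℝ)+1) * ((k:ℝ)+1)) := by
  set J : Fin (k+1) := ⟨j, by omega⟩ with hJ
  set K : Fin (k+1) := ⟨k, by omega⟩ with hK
  set Aj : Finset (Fin (k+1)) := Finset.univ.filter fun i : Fin (k+1) => (i:ℕ) < j+1 with hAj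
  set Bk : Finset (Fin (k+1)) := Finset.univ.filter fun i : Fin (k+1) => (i:ℕ) < k+1 with hBk
  set A' : Finset (Fin (k+1)) := Finset.univ.filter fun i : Fin (k+1) => (i:ℕ) < j with hA'
  set B' : Finset (Fin (k+1)) := Finset.univ.filter fun i : Fin (k+1) => (i:ℕ) < k with hB'
  have hJA : J ∈ Aj := by
    rw [hAj]
    refine Finset.mem_filter.2 ⟨Finset.mem_univ _, ?_⟩
    show j < j + 1
    omega
  have hKB : K ∈ Bk := by
    rw [hBk]
    refine Finset.mem_filter.2 ⟨Finset.mem_univ _, ?_⟩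
    show k < k + 1
    omega
  have hKA : K ∉ Aj := by
    rw [hAj]
    intro h
    have h2 := (Finset.mem_filter.1 h).2
    have : (K:ℕ) = k := rfl
    omega
  have hAB : Aj ⊆ Bk := by
    rw [hAj, hBk]
    intro i hi
    simp only [Finset.mem_filter, Finset.mem_univ, true_and] at hi ⊢
    omega
  set W : (Fin (k+1) → ℝ) → ℝ :=
    fun x => ((x J)^2 / dd Aj x) * ((x K)^2 / dd Bk x) with hW
  have hWm : Measurable W :=
    (((measurable_pi_apply J).pow measurable_const).div (measurable_dd Aj)).mul
      (((measurable_pi_apply K).pow measurable_const).div (measurable_dd Bk))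
  have hW0 : ∀ x, 0 ≤ W x := fun x =>
    mul_nonneg (ratio_nonneg _ _ _) (ratio_nonneg _ _ _)
  have hW1 : ∀ x, W x ≤ 1 := fun x => by
    rw [hW]
    calc ((x J)^2 / dd Aj x) * ((x K)^2 / dd Bk x) ≤ 1 * 1 :=
          mul_le_mul (ratio_le_one hJA x) (ratio_le_one hKB x) (ratio_nonneg _ _ _)
            zero_le_one
      _ = 1 := mul_one 1
  have heven : ∀ a x, W (flip a x) = W x := by
    intro a x
    have hsq : ∀ i : Fin (k+1), (flip a x i)^2 = (x i)^2 := by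
      intro i
      simp only [flip]
      split_ifs <;> ring
    rw [hW]
    dsimp only
    rw [dd_flip, dd_flip, hsq J, hsq K]
  constructor
  · exact holder_step ν hsym hν0 hWm hW0 hW1 heven A' B'
  · have hval := ratio_value ν hν0 hAB hJA hKB hKA
    rw [hval, card_Am (j+1) (by omega) (by omega), card_Am (k+1) (by omega) (by omega)]
    push_cast
    ring

end Stmt7Aux

open Stmt7Aux

/-- For i.i.d. symmetric `X_i` with `P(X_i = 0) = 0` and `j < k`,
`E[(X_{j+1}^2/V_{j+1}^2)(X_{k+1}^2/V_{k+1}^2)|Y_j||Y_k|]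
  ≤ E[(X_{j+1}^2/V_{j+1}^2)(X_{k+1}^2/V_{k+1}^2)] = 1/((j+1)(k+1))`. -/
theorem stmt7 {Ω : Type*} [MeasurableSpace Ω] (μ : Measure Ω) [IsProbabilityMeasure μ]
    (X : ℕ → Ω → ℝ)
    (hmeas : ∀ i, Measurable (X i))
    (hiid : IID μ X)
    (hsymm : SymmLaw μ X)
    (hzero : ∀ i, μ {ω | X i ω = 0} = 0) :
    ∀ j k : ℕ, j < k →
      (∫ ω, ((X (j+1) ω)^2 / V2 X (j+1) ω) * ((X (k+1) ω)^2 / V2 X (k+1) ω)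
          * |Ysn X j ω| * |Ysn X k ω| ∂μ
        ≤ ∫ ω, ((X (j+1) ω)^2 / V2 X (j+1) ω) * ((X (k+1) ω)^2 / V2 X (k+1) ω) ∂μ)
      ∧ ∫ ω, ((X (j+1) ω)^2 / V2 X (j+1) ω) * ((X (k+1) ω)^2 / V2 X (k+1) ω) ∂μ
          = 1 / (((j : ℝ) + 1) * ((k : ℝ) + 1)) := by
  intro j k hjk
  classical
  haveI hν_prob : IsProbabilityMeasure (Measure.map (X 1) μ) :=
    Measure.isProbabilityMeasure_map (hmeas 1).aemeasurable
  set ν : Measure ℝ := Measure.map (X 1) μ with hν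
  have hident : ∀ n, Measure.map (X n) μ = ν := fun n => (hiid.2 n).map_eq
  have hsymν : Measure.map Neg.neg ν = ν := by
    have h2 : Measure.map (fun ω => -X 1 ω) μ = Measure.map Neg.neg ν := by
      rw [hν, Measure.map_map measurable_neg (hmeas 1)]
      rfl
    rw [← h2, ← hsymm 1]
  have hν0 : ν ({0} : Set ℝ) = 0 := by
    rw [hν, Measure.map_apply (hmeas 1) (measurableSet_singleton 0)]
    have h : X 1 ⁻¹' {0} = {ω | X 1 ω = 0} := by ext ω; simp
    rw [h]; exact hzero 1
  set Z : Ω → (Fin (k+1) → ℝ) := fun ω i => X ((i:ℕ)+1) ω with hZdef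
  have hZ : Measurable Z := measurable_pi_iff.mpr fun i => hmeas _
  have hmap : Measure.map Z μ = Measure.pi (fun _ : Fin (k+1) => ν) :=
    Stmt7Aux.map_eq_pi ν μ X hmeas hiid.1 hident
  have htrans : ∀ F : (Fin (k+1) → ℝ) → ℝ, Measurable F →
      ∫ ω, F (Z ω) ∂μ = ∫ x, F x ∂(Measure.pi (fun _ : Fin (k+1) => ν)) := by
    intro F hF
    rw [← hmap, integral_map hZ.aemeasurable hF.aestronglyMeasurable]
  have hV2 : ∀ m, m ≤ k+1 → ∀ ω, V2 X m ω
      = dd (Finset.univ.filter fun i : Fin (k+1) => (i:ℕ) < m) (Z ω) := by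
    intro m hm ω
    exact sum_Icc_eq m hm (fun n => (X n ω)^2)
  have hS : ∀ m, m ≤ k+1 → ∀ ω, S X m ω
      = ss (Finset.univ.filter fun i : Fin (k+1) => (i:ℕ) < m) (Z ω) := by
    intro m hm ω
    exact sum_Icc_eq m hm (fun n => X n ω)
  have hYsn : ∀ m, m ≤ k+1 → ∀ ω, Ysn X m ω
      = ss (Finset.univ.filter fun i : Fin (k+1) => (i:ℕ) < m) (Z ω)
        / Real.sqrt (dd (Finset.univ.filter fun i : Fin (k+1) => (i:ℕ) < m) (Z ω)) := by
    intro m hm ω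
    simp only [Ysn, V]
    rw [hV2 m hm ω, hS m hm ω]
  obtain ⟨hp1, hp2⟩ := Stmt7Aux.pi_side ν hsymν hν0 j k hjk
  -- measurability of the two pi-side integrands
  have hWm : Measurable (fun x : Fin (k+1) → ℝ =>
      ((x ⟨j, by omega⟩)^2 / dd (Finset.univ.filter fun i : Fin (k+1) => (i:ℕ) < j+1) x)
      * ((x ⟨k, by omega⟩)^2
          / dd (Finset.univ.filter fun i : Fin (k+1) => (i:ℕ) < k+1) x)) :=
    (((measurable_pi_apply _).pow measurable_const).div (measurable_dd _)).mul
      (((measurable_pi_apply _).pow measurable_const).div (measurable_dd _))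
  have hF1m : Measurable (fun x : Fin (k+1) → ℝ =>
      ((x ⟨j, by omega⟩)^2 / dd (Finset.univ.filter fun i : Fin (k+1) => (i:ℕ) < j+1) x)
      * ((x ⟨k, by omega⟩)^2
          / dd (Finset.univ.filter fun i : Fin (k+1) => (i:ℕ) < k+1) x)
      * |ss (Finset.univ.filter fun i : Fin (k+1) => (i:ℕ) < j) x
          / Real.sqrt (dd (Finset.univ.filter fun i : Fin (k+1) => (i:ℕ) < j) x)|
      * |ss (Finset.univ.filter fun i : Fin (k+1) => (i:ℕ) < k) x
          / Real.sqrt (dd (Finset.univ.filter fun i : Fin (k+1) => (i:ℕ) < k) x)|) :=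
    ((hWm.mul ((measurable_ss _).div (measurable_dd _).sqrt).abs).mul
      ((measurable_ss _).div (measurable_dd _).sqrt).abs)
  -- pointwise identification
  have hpt1 : ∀ ω, ((X (j+1) ω)^2 / V2 X (j+1) ω) * ((X (k+1) ω)^2 / V2 X (k+1) ω)
      * |Ysn X j ω| * |Ysn X k ω|
      = ((Z ω ⟨j, by omega⟩)^2
            / dd (Finset.univ.filter fun i : Fin (k+1) => (i:ℕ) < j+1) (Z ω))
        * ((Z ω ⟨k, by omega⟩)^2
            / dd (Finset.univ.filter fun i : Fin (k+1) => (i:ℕ) < k+1) (Z ω))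
        * |ss (Finset.univ.filter fun i : Fin (k+1) => (i:ℕ) < j) (Z ω)
            / Real.sqrt (dd (Finset.univ.filter fun i : Fin (k+1) => (i:ℕ) < j) (Z ω))|
        * |ss (Finset.univ.filter fun i : Fin (k+1) => (i:ℕ) < k) (Z ω)
            / Real.sqrt (dd (Finset.univ.filter fun i : Fin (k+1) => (i:ℕ) < k) (Z ω))| := by
    intro ω
    rw [hV2 (j+1) (by omega) ω, hV2 (k+1) (by omega) ω, hYsn j (by omega) ω,
      hYsn k (by omega) ω]
  have hpt2 : ∀ ω, ((X (j+1) ω)^2 / V2 X (j+1) ω) * ((X (k+1) ω)^2 / V2 X (k+1) ω)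
      = ((Z ω ⟨j, by omega⟩)^2
            / dd (Finset.univ.filter fun i : Fin (k+1) => (i:ℕ) < j+1) (Z ω))
        * ((Z ω ⟨k, by omega⟩)^2
            / dd (Finset.univ.filter fun i : Fin (k+1) => (i:ℕ) < k+1) (Z ω)) := by
    intro ω
    rw [hV2 (j+1) (by omega) ω, hV2 (k+1) (by omega) ω]
  have e1 : ∫ ω, ((X (j+1) ω)^2 / V2 X (j+1) ω) * ((X (k+1) ω)^2 / V2 X (k+1) ω)
      * |Ysn X j ω| * |Ysn X k ω| ∂μ
      = ∫ x : Fin (k+1) → ℝ,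
        ((x ⟨j, by omega⟩)^2 / dd (Finset.univ.filter fun i : Fin (k+1) => (i:ℕ) < j+1) x)
        * ((x ⟨k, by omega⟩)^2
            / dd (Finset.univ.filter fun i : Fin (k+1) => (i:ℕ) < k+1) x)
        * |ss (Finset.univ.filter fun i : Fin (k+1) => (i:ℕ) < j) x
            / Real.sqrt (dd (Finset.univ.filter fun i : Fin (k+1) => (i:ℕ) < j) x)|
        * |ss (Finset.univ.filter fun i : Fin (k+1) => (i:ℕ) < k) x
            / Real.sqrt (dd (Finset.univ.filter fun i : Fin (k+1) => (i:ℕ) < k) x)|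
        ∂(Measure.pi fun _ : Fin (k+1) => ν) := by
    rw [integral_congr_ae (ae_of_all _ hpt1)]
    exact htrans _ hF1m
  have e2 : ∫ ω, ((X (j+1) ω)^2 / V2 X (j+1) ω) * ((X (k+1) ω)^2 / V2 X (k+1) ω) ∂μ
      = ∫ x : Fin (k+1) → ℝ,
        ((x ⟨j, by omega⟩)^2 / dd (Finset.univ.filter fun i : Fin (k+1) => (i:ℕ) < j+1) x)
        * ((x ⟨k, by omega⟩)^2
            / dd (Finset.univ.filter fun i : Fin (k+1) => (i:ℕ) < k+1) x)
        ∂(Measure.pi fun _ : Fin (k+1) => ν) := by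
    rw [integral_congr_ae (ae_of_all _ hpt2)]
    exact htrans _ hWm
  constructor
  · rw [e1, e2]
    exact hp1
  · rw [e2]
    exact hp2
end
end

section
/- Let X_1, X_2, ... be i.i.d. symmetric random variables with P(X_i=0)=0, V_j^2 = \sum_{i=1}^j X_i^2, and write a_{j+1}/(j+1) = E[X_{j+1}^4/V_{j+1}^4]. Then E[(\sum_{j=n}^{l} X_{j+1}^2/V_{j+1}^2)^2] \le (max_{n \le j \le l} |a_{j+1} - 1/(j+1)| + \sum_{j=n}^{l} 1/(j+1)) \cdot (\sum_{j=n}^{l} 1/(j+1)). -/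
open MeasureTheory ProbabilityTheory Filter

noncomputable section

set_option linter.unusedSectionVars false

section AuxStmt14

variable {Ω : Type*} [MeasurableSpace Ω] (μ : Measure Ω) [IsProbabilityMeasure μ]
  (X : ℕ → Ω → ℝ)

lemma iIndepFun_reindex (hiid : IID μ X) {m : ℕ} (f : Fin m → ℕ)
    (hf : Function.Injective f) :
    iIndepFun (fun t => X (f t)) μ := by
  classical
  rw [iIndepFun_iff]
  intro T g hg
  set g' : ℕ → Set Ω := fun i => if h : ∃ t, t ∈ T ∧ f t = i then g h.choose else Set.univ
    with hg'
  have hgf : ∀ t ∈ T, g' (f t) = g t := by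
    intro t ht
    have h : ∃ t', t' ∈ T ∧ f t' = f t := ⟨t, ht, rfl⟩
    have hcs := h.choose_spec
    show (if h : ∃ t', t' ∈ T ∧ f t' = f t then g h.choose else Set.univ) = g t
    rw [dif_pos h, hf hcs.2]
  have h1 : (⋂ t ∈ T, g t) = ⋂ i ∈ T.image f, g' i := by
    rw [Finset.set_biInter_finset_image]
    exact Set.iInter₂_congr fun t ht => (hgf t ht).symm
  have h2 : (∏ t ∈ T, μ (g t)) = ∏ i ∈ T.image f, μ (g' i) := by
    rw [Finset.prod_image (fun t _ t' _ h => hf h)]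
    exact Finset.prod_congr rfl fun t ht => by rw [hgf t ht]
  rw [h1, h2]
  refine hiid.1.meas_biInter fun i hi => ?_
  obtain ⟨t, ht, rfl⟩ := Finset.mem_image.mp hi
  rw [hgf t ht]
  exact hg t ht

lemma map_reindex (hmeas : ∀ i, Measurable (X i)) (hiid : IID μ X) {m : ℕ}
    (f : Fin m → ℕ) (hf : Function.Injective f) :
    μ.map (fun ω (t : Fin m) => X (f t) ω) = Measure.pi (fun _ => μ.map (X 1)) := by
  have hprob : IsProbabilityMeasure (μ.map (X 1)) :=
    Measure.isProbabilityMeasure_map (hmeas 1).aemeasurable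
  have hY : Measurable (fun ω (t : Fin m) => X (f t) ω) :=
    measurable_pi_lambda _ fun t => hmeas (f t)
  refine (Measure.pi_eq fun s hs => ?_).symm
  rw [Measure.map_apply hY (MeasurableSet.univ_pi hs)]
  have hpre : (fun ω (t : Fin m) => X (f t) ω) ⁻¹' Set.pi Set.univ s
      = ⋂ t, X (f t) ⁻¹' s t := by
    ext ω; simp [Set.mem_pi]
  rw [hpre,
    (iIndepFun_reindex μ X hiid f hf).meas_iInter (fun t => ⟨s t, hs t, rfl⟩)]
  exact Finset.prod_congr rfl fun t _ => by
    rw [← (hiid.2 (f t)).map_eq, Measure.map_apply (hmeas (f t)) (hs t)]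

lemma integral_reindex_eq (hmeas : ∀ i, Measurable (X i)) (hiid : IID μ X) {m : ℕ}
    (f₁ f₂ : Fin m → ℕ) (h1 : Function.Injective f₁) (h2 : Function.Injective f₂)
    (g : (Fin m → ℝ) → ℝ) (hg : Measurable g) :
    ∫ ω, g (fun t => X (f₁ t) ω) ∂μ = ∫ ω, g (fun t => X (f₂ t) ω) ∂μ := by
  have hY1 : Measurable (fun ω (t : Fin m) => X (f₁ t) ω) :=
    measurable_pi_lambda _ fun t => hmeas (f₁ t)
  have hY2 : Measurable (fun ω (t : Fin m) => X (f₂ t) ω) :=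
    measurable_pi_lambda _ fun t => hmeas (f₂ t)
  rw [← integral_map hY1.aemeasurable hg.aestronglyMeasurable,
    ← integral_map hY2.aemeasurable hg.aestronglyMeasurable,
    map_reindex μ X hmeas hiid f₁ h1, map_reindex μ X hmeas hiid f₂ h2]

lemma V2_nonneg (m : ℕ) (ω : Ω) : 0 ≤ V2 X m ω :=
  Finset.sum_nonneg fun _ _ => sq_nonneg _

lemma V2_meas (hmeas : ∀ i, Measurable (X i)) (m : ℕ) : Measurable (V2 X m) := by
  unfold V2
  exact Finset.measurable_sum _ fun i _ => (hmeas i).pow_const 2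

lemma frac_nonneg (i m : ℕ) (ω : Ω) : 0 ≤ (X i ω)^2 / V2 X m ω :=
  div_nonneg (sq_nonneg _) (V2_nonneg X m ω)

lemma frac_le_one (i m : ℕ) (hi : i ∈ Finset.Icc 1 m) (ω : Ω) :
    (X i ω)^2 / V2 X m ω ≤ 1 := by
  rcases eq_or_lt_of_le (V2_nonneg X m ω) with h | h
  · rw [← h, div_zero]; norm_num
  · rw [div_le_one h]
    exact Finset.single_le_sum (f := fun i => (X i ω)^2) (fun _ _ => sq_nonneg _) hi

lemma ae_V2_pos (hzero : ∀ i, μ {ω | X i ω = 0} = 0) (p : ℕ) :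
    ∀ᵐ ω ∂μ, 0 < V2 X (p+1) ω := by
  rw [ae_iff]
  refine measure_mono_null (fun ω h => ?_) (hzero 1)
  simp only [Set.mem_setOf_eq, not_lt] at h
  have h0 : V2 X (p+1) ω = 0 := le_antisymm h (V2_nonneg X _ ω)
  have h1 : (1:ℕ) ∈ Finset.Icc 1 (p+1) := by simp
  have := (Finset.sum_eq_zero_iff_of_nonneg (fun i _ => sq_nonneg (X i ω))).mp h0 1 h1
  exact pow_eq_zero_iff two_ne_zero |>.mp this

lemma integrable_of_bdd {f : Ω → ℝ} (hf : Measurable f) (h0 : ∀ ω, 0 ≤ f ω)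
    (h1 : ∀ ω, f ω ≤ 1) : Integrable f μ := by
  refine Integrable.mono' (integrable_const 1) hf.aestronglyMeasurable ?_
  filter_upwards with ω
  rw [Real.norm_eq_abs, abs_of_nonneg (h0 ω)]
  exact h1 ω

lemma sum_filter_eq_V2 (k p : ℕ) (ω : Ω) :
    ∑ t ∈ Finset.univ.filter (fun t : Fin (k+1) => t.val ≤ p), (X (t.val+1) ω)^2
      = V2 X (min p k + 1) ω := by
  unfold V2
  refine Finset.sum_nbij' (fun t => t.val + 1) (fun i => ⟨min (i - 1) k, by omega⟩) ?_ ?_ ?_ ?_ ?_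
  · intro t ht
    simp only [Finset.mem_filter, Finset.mem_univ, true_and] at ht
    have := t.isLt
    simp only [Finset.mem_Icc]; omega
  · intro i hi
    simp only [Finset.mem_Icc] at hi
    simp only [Finset.mem_filter, Finset.mem_univ, true_and]; omega
  · intro t ht
    have := t.isLt
    ext
    simp; omega
  · intro i hi; simp only [Finset.mem_Icc] at hi; simp; omega
  · intro t ht; rfl

lemma sum_univ_eq_V2 (k : ℕ) (ω : Ω) :
    ∑ t : Fin (k+1), (X (t.val+1) ω)^2 = V2 X (k+1) ω := by
  have := sum_filter_eq_V2 X k k ω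
  rw [min_self] at this
  rw [← this]
  congr 1
  rw [Finset.filter_true_of_mem fun t _ => Nat.lt_succ_iff.mp t.isLt]

lemma card_filter_le (k j : ℕ) (hj : j ≤ k) :
    (Finset.univ.filter (fun t : Fin (k+1) => t.val ≤ j)).card = j + 1 := by
  rw [Finset.card_filter, Fin.sum_univ_eq_sum_range (fun i => if i ≤ j then 1 else 0),
    ← Finset.card_filter]
  have : (Finset.range (k+1)).filter (fun i => i ≤ j) = Finset.range (j+1) := by
    ext i
    simp only [Finset.mem_filter, Finset.mem_range]
    omega
  rw [this, Finset.card_range]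


lemma integral_W (hmeas : ∀ i, Measurable (X i)) (hiid : IID μ X)
    (hzero : ∀ i, μ {ω | X i ω = 0} = 0) (k : ℕ) :
    ∫ ω, (X (k+1) ω)^2 / V2 X (k+1) ω ∂μ = 1 / ((k:ℝ)+1) := by
  classical
  set g : Fin (k+1) → (Fin (k+1) → ℝ) → ℝ := fun i v => (v i)^2 / ∑ t, (v t)^2 with hg
  have hgmeas : ∀ i, Measurable (g i) := fun i =>
    Measurable.div ((measurable_pi_apply i).pow_const 2)
      (Finset.measurable_sum _ fun t _ => (measurable_pi_apply t).pow_const 2)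
  set i₀ : Fin (k+1) := ⟨k, Nat.lt_succ_self k⟩ with hi₀
  have hswap : ∀ i : Fin (k+1),
      (∫ ω, (X (i.val+1) ω)^2 / V2 X (k+1) ω ∂μ)
        = ∫ ω, (X (k+1) ω)^2 / V2 X (k+1) ω ∂μ := by
    intro i
    set e := Equiv.swap i i₀ with he
    have h1 : Function.Injective (fun t : Fin (k+1) => (e t).val + 1) := by
      intro s t h
      simp only [add_left_inj] at h
      exact e.injective (Fin.val_injective h)
    have h2 : Function.Injective (fun t : Fin (k+1) => t.val + 1) := by
      intro s t h
      simp only [add_left_inj] at h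
      exact Fin.val_injective h
    have key := integral_reindex_eq μ X hmeas hiid _ _ h1 h2 (g i₀) (hgmeas i₀)
    have hL : ∀ ω, g i₀ (fun t => X ((e t).val + 1) ω)
        = (X (i.val+1) ω)^2 / V2 X (k+1) ω := by
      intro ω
      show ((fun t : Fin (k+1) => X (t.val+1) ω) (e i₀))^2
          / (∑ t, ((fun t : Fin (k+1) => X (t.val+1) ω) (e t))^2) = _
      rw [Equiv.sum_comp e (fun t : Fin (k+1) => (X (t.val+1) ω)^2), sum_univ_eq_V2,
        he, Equiv.swap_apply_right]
    have hR : ∀ ω, g i₀ (fun t : Fin (k+1) => X (t.val + 1) ω)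
        = (X (k+1) ω)^2 / V2 X (k+1) ω := by
      intro ω
      show (X (i₀.val+1) ω)^2 / (∑ t : Fin (k+1), (X (t.val+1) ω)^2) = _
      rw [sum_univ_eq_V2]
    simp only [hL, hR] at key
    exact key
  have hae : ∀ᵐ ω ∂μ, ∑ i : Fin (k+1), (X (i.val+1) ω)^2 / V2 X (k+1) ω = 1 := by
    filter_upwards [ae_V2_pos μ X hzero k] with ω hpos
    rw [← Finset.sum_div, sum_univ_eq_V2, div_self hpos.ne']
  have hint : ∀ i : Fin (k+1),
      Integrable (fun ω => (X (i.val+1) ω)^2 / V2 X (k+1) ω) μ := fun i =>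
    integrable_of_bdd μ (((hmeas _).pow_const 2).div (V2_meas X hmeas _))
      (fun ω => frac_nonneg X _ _ ω)
      (fun ω => frac_le_one X _ _ (by simp only [Finset.mem_Icc]; omega) ω)
  have hsum : ∑ i : Fin (k+1), ∫ ω, (X (i.val+1) ω)^2 / V2 X (k+1) ω ∂μ = 1 := by
    rw [← integral_finset_sum _ fun i _ => hint i, integral_congr_ae hae]
    simp
  have hfin : ((k:ℝ)+1) * ∫ ω, (X (k+1) ω)^2 / V2 X (k+1) ω ∂μ = 1 := by
    have hcc : ∑ i : Fin (k+1), ∫ ω, (X (i.val+1) ω)^2 / V2 X (k+1) ω ∂μ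
        = ((k:ℝ)+1) * ∫ ω, (X (k+1) ω)^2 / V2 X (k+1) ω ∂μ := by
      rw [Finset.sum_congr rfl (fun i _ => hswap i), Finset.sum_const, Finset.card_univ,
        Fintype.card_fin, nsmul_eq_mul]
      push_cast
      ring
    rw [← hcc, hsum]
  have hk : ((k:ℝ)+1) ≠ 0 := by positivity
  rw [eq_div_iff hk]
  linarith [hfin]

lemma integral_WW (hmeas : ∀ i, Measurable (X i)) (hiid : IID μ X)
    (hzero : ∀ i, μ {ω | X i ω = 0} = 0) (j k : ℕ) (hjk : j < k) :
    ∫ ω, (X (j+1) ω)^2 / V2 X (j+1) ω * ((X (k+1) ω)^2 / V2 X (k+1) ω) ∂μ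
      = 1 / ((j:ℝ)+1) * (1 / ((k:ℝ)+1)) := by
  classical
  set F : Finset (Fin (k+1)) := Finset.univ.filter (fun t : Fin (k+1) => t.val ≤ j) with hF
  set ik : Fin (k+1) := ⟨k, Nat.lt_succ_self k⟩ with hik
  set g : Fin (k+1) → (Fin (k+1) → ℝ) → ℝ :=
    fun i v => (v i)^2 / (∑ t ∈ F, (v t)^2) * ((v ik)^2 / ∑ t, (v t)^2) with hg
  have hgmeas : ∀ i, Measurable (g i) := fun i =>
    Measurable.mul
      (((measurable_pi_apply i).pow_const 2).div
        (Finset.measurable_sum _ fun t _ => (measurable_pi_apply t).pow_const 2))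
      (((measurable_pi_apply ik).pow_const 2).div
        (Finset.measurable_sum _ fun t _ => (measurable_pi_apply t).pow_const 2))
  set i₀ : Fin (k+1) := ⟨j, by omega⟩ with hi₀
  have hi₀F : i₀ ∈ F := by simp [hF, hi₀]
  have hQ : ∀ ω, (∑ t ∈ F, (X (t.val+1) ω)^2) = V2 X (j+1) ω := by
    intro ω
    have := sum_filter_eq_V2 X k j ω
    rwa [min_eq_left (le_of_lt hjk)] at this
  have hYg : ∀ (i : Fin (k+1)) (ω : Ω), g i (fun t => X (t.val+1) ω)
      = (X (i.val+1) ω)^2 / V2 X (j+1) ω * ((X (k+1) ω)^2 / V2 X (k+1) ω) := by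
    intro i ω
    show (X (i.val+1) ω)^2 / (∑ t ∈ F, (X (t.val+1) ω)^2)
        * ((X (ik.val+1) ω)^2 / ∑ t : Fin (k+1), (X (t.val+1) ω)^2) = _
    rw [hQ, sum_univ_eq_V2]
  have hswap : ∀ i ∈ F,
      (∫ ω, (X (i.val+1) ω)^2 / V2 X (j+1) ω * ((X (k+1) ω)^2 / V2 X (k+1) ω) ∂μ)
        = ∫ ω, (X (j+1) ω)^2 / V2 X (j+1) ω * ((X (k+1) ω)^2 / V2 X (k+1) ω) ∂μ := by
    intro i hi
    have hij : i.val ≤ j := by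
      simpa [hF] using hi
    set e := Equiv.swap i i₀ with he
    have hmem : ∀ t ∈ F, e t ∈ F := by
      intro t ht
      have htj : t.val ≤ j := by simpa [hF] using ht
      have : e t = i ∨ e t = i₀ ∨ e t = t := by
        rw [he, Equiv.swap_apply_def]
        split_ifs with h1 h2
        · right; left; rfl
        · left; rfl
        · right; right; rfl
      simp only [hF, Finset.mem_filter, Finset.mem_univ, true_and]
      rcases this with h | h | h <;> rw [h] <;> simp [hi₀] <;> omega
    have hsum_e : ∀ (G : Finset (Fin (k+1))), (∀ t ∈ G, e t ∈ G) → ∀ (v : Fin (k+1) → ℝ),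
        (∑ t ∈ G, (v (e t))^2) = ∑ t ∈ G, (v t)^2 := by
      intro G hG v
      refine Finset.sum_nbij' (fun t => e t) (fun t => e t) hG hG ?_ ?_ ?_
      · intro t ht; rw [he]; exact Equiv.swap_apply_self _ _ _
      · intro t ht; rw [he]; exact Equiv.swap_apply_self _ _ _
      · intro t ht; rfl
    have hek : e ik = ik := by
      rw [he]
      apply Equiv.swap_apply_of_ne_of_ne
      · exact Fin.ne_of_val_ne (by simp [hik]; omega)
      · exact Fin.ne_of_val_ne (by simp [hik, hi₀]; omega)
    have h1 : Function.Injective (fun t : Fin (k+1) => (e t).val + 1) := by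
      intro s t h
      simp only [add_left_inj] at h
      exact e.injective (Fin.val_injective h)
    have h2 : Function.Injective (fun t : Fin (k+1) => t.val + 1) := by
      intro s t h
      simp only [add_left_inj] at h
      exact Fin.val_injective h
    have key := integral_reindex_eq μ X hmeas hiid _ _ h1 h2 (g i₀) (hgmeas i₀)
    have hL : ∀ ω, g i₀ (fun t => X ((e t).val + 1) ω)
        = (X (i.val+1) ω)^2 / V2 X (j+1) ω * ((X (k+1) ω)^2 / V2 X (k+1) ω) := by
      intro ω
      show (X ((e i₀).val+1) ω)^2 / (∑ t ∈ F, (X ((e t).val+1) ω)^2)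
          * ((X ((e ik).val+1) ω)^2 / ∑ t : Fin (k+1), (X ((e t).val+1) ω)^2) = _
      rw [hsum_e F hmem (fun t => X (t.val+1) ω),
        hsum_e Finset.univ (fun t _ => Finset.mem_univ _) (fun t => X (t.val+1) ω),
        hQ, sum_univ_eq_V2, hek]
      have : e i₀ = i := by rw [he]; exact Equiv.swap_apply_right _ _
      rw [this]
    simp only [hL, hYg] at key
    exact key
  have hae : ∀ᵐ ω ∂μ, ∑ i ∈ F,
      (X (i.val+1) ω)^2 / V2 X (j+1) ω * ((X (k+1) ω)^2 / V2 X (k+1) ω)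
        = (X (k+1) ω)^2 / V2 X (k+1) ω := by
    filter_upwards [ae_V2_pos μ X hzero j] with ω hpos
    rw [← Finset.sum_mul, ← Finset.sum_div, hQ, div_self hpos.ne', one_mul]
  have hint : ∀ i ∈ F, Integrable
      (fun ω => (X (i.val+1) ω)^2 / V2 X (j+1) ω * ((X (k+1) ω)^2 / V2 X (k+1) ω)) μ := by
    intro i hi
    have hij : i.val ≤ j := by simpa [hF] using hi
    refine integrable_of_bdd μ ?_ ?_ ?_
    · exact (((hmeas _).pow_const 2).div (V2_meas X hmeas _)).mul
        (((hmeas _).pow_const 2).div (V2_meas X hmeas _))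
    · exact fun ω => mul_nonneg (frac_nonneg X _ _ ω) (frac_nonneg X _ _ ω)
    · intro ω
      exact mul_le_one₀ (frac_le_one X _ _ (by simp only [Finset.mem_Icc]; omega) ω)
        (frac_nonneg X _ _ ω) (frac_le_one X _ _ (by simp only [Finset.mem_Icc]; omega) ω)
  have hsum : ∑ i ∈ F, ∫ ω,
      (X (i.val+1) ω)^2 / V2 X (j+1) ω * ((X (k+1) ω)^2 / V2 X (k+1) ω) ∂μ
        = 1 / ((k:ℝ)+1) := by
    rw [← integral_finset_sum _ hint, integral_congr_ae hae,
      integral_W μ X hmeas hiid hzero k]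
  have hfin : ((j:ℝ)+1) * ∫ ω,
      (X (j+1) ω)^2 / V2 X (j+1) ω * ((X (k+1) ω)^2 / V2 X (k+1) ω) ∂μ
        = 1 / ((k:ℝ)+1) := by
    have hcc : ∑ i ∈ F, ∫ ω,
        (X (i.val+1) ω)^2 / V2 X (j+1) ω * ((X (k+1) ω)^2 / V2 X (k+1) ω) ∂μ
          = ((j:ℝ)+1) * ∫ ω,
            (X (j+1) ω)^2 / V2 X (j+1) ω * ((X (k+1) ω)^2 / V2 X (k+1) ω) ∂μ := by
      rw [Finset.sum_congr rfl hswap, Finset.sum_const, hF,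
        card_filter_le k j (le_of_lt hjk), nsmul_eq_mul]
      push_cast
      ring
    rw [← hcc, hsum]
  have hj : ((j:ℝ)+1) ≠ 0 := by positivity
  apply mul_left_cancel₀ hj
  rw [hfin]
  field_simp

theorem stmt14' {Ω : Type*} [MeasurableSpace Ω] (μ : Measure Ω) [IsProbabilityMeasure μ]
    (X : ℕ → Ω → ℝ)
    (hmeas : ∀ i, Measurable (X i))
    (hiid : IID μ X)
    (hzero : ∀ i, μ {ω | X i ω = 0} = 0)
    (a : ℕ → ℝ)
    (ha : ∀ j : ℕ, a (j+1) / ((j : ℝ) + 1) = ∫ ω, (X (j+1) ω)^4 / (V2 X (j+1) ω)^2 ∂μ)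
    (n l : ℕ) (hnl : n ≤ l) :
    ∫ ω, (∑ j ∈ Finset.Icc n l, (X (j+1) ω)^2 / V2 X (j+1) ω)^2 ∂μ
      ≤ ((Finset.Icc n l).sup' (Finset.nonempty_Icc.mpr hnl)
            (fun j => |a (j+1) - 1 / ((j : ℝ) + 1)|)
          + ∑ j ∈ Finset.Icc n l, (1 : ℝ) / ((j : ℝ) + 1))
        * ∑ j ∈ Finset.Icc n l, (1 : ℝ) / ((j : ℝ) + 1) := by
  classical
  set W : ℕ → Ω → ℝ := fun j ω => (X (j+1) ω)^2 / V2 X (j+1) ω with hW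
  set b : ℕ → ℝ := fun j => 1 / ((j:ℝ)+1) with hb
  set M : ℝ := (Finset.Icc n l).sup' (Finset.nonempty_Icc.mpr hnl)
      (fun j => |a (j+1) - 1 / ((j : ℝ) + 1)|) with hM
  have hWmeas : ∀ j, Measurable (W j) := fun j =>
    ((hmeas _).pow_const 2).div (V2_meas X hmeas _)
  have hW0 : ∀ j ω, 0 ≤ W j ω := fun j ω => frac_nonneg X _ _ ω
  have hW1 : ∀ j ω, W j ω ≤ 1 := fun j ω =>
    frac_le_one X _ _ (by simp only [Finset.mem_Icc]; omega) ω
  have hintWW : ∀ j k, Integrable (fun ω => W j ω * W k ω) μ := fun j k =>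
    integrable_of_bdd μ ((hWmeas j).mul (hWmeas k))
      (fun ω => mul_nonneg (hW0 j ω) (hW0 k ω))
      (fun ω => mul_le_one₀ (hW1 j ω) (hW0 k ω) (hW1 k ω))
  have hexp : ∀ ω : Ω, (∑ j ∈ Finset.Icc n l, W j ω)^2
      = ∑ j ∈ Finset.Icc n l, ∑ k ∈ Finset.Icc n l, W j ω * W k ω := by
    intro ω
    rw [sq, Finset.sum_mul_sum]
  have h1 : ∫ ω, (∑ j ∈ Finset.Icc n l, W j ω)^2 ∂μ
      = ∑ j ∈ Finset.Icc n l, ∑ k ∈ Finset.Icc n l, ∫ ω, W j ω * W k ω ∂μ := by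
    rw [integral_congr_ae (Eventually.of_forall hexp),
      integral_finset_sum _ (fun j _ => integrable_finset_sum _ (fun k _ => hintWW j k))]
    exact Finset.sum_congr rfl fun j _ => integral_finset_sum _ fun k _ => hintWW j k
  have hdiag : ∀ j : ℕ, ∫ ω, W j ω * W j ω ∂μ = a (j+1) * b j := by
    intro j
    have hpt : ∀ ω, W j ω * W j ω = (X (j+1) ω)^4 / (V2 X (j+1) ω)^2 := by
      intro ω
      rw [hW]
      rw [div_mul_div_comm, ← pow_add, ← sq]
    rw [integral_congr_ae (Eventually.of_forall hpt), ← ha j, hb, div_eq_mul_one_div]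
  have hoff : ∀ j k : ℕ, j ≠ k → ∫ ω, W j ω * W k ω ∂μ = b j * b k := by
    intro j k hjk
    rcases lt_or_gt_of_ne hjk with h | h
    · exact integral_WW μ X hmeas hiid hzero j k h
    · have hpt : ∀ ω, W j ω * W k ω = W k ω * W j ω := fun ω => mul_comm _ _
      rw [integral_congr_ae (Eventually.of_forall hpt),
        integral_WW μ X hmeas hiid hzero k j h, mul_comm]
  have hval : ∀ j : ℕ, ∀ k : ℕ, ∫ ω, W j ω * W k ω ∂μ
      = b j * b k + (if j = k then (a (j+1) - b j) * b j else 0) := by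
    intro j k
    by_cases h : j = k
    · subst h
      rw [hdiag j, if_pos rfl]
      ring
    · rw [hoff j k h, if_neg h, add_zero]
  have h2 : ∑ j ∈ Finset.Icc n l, ∑ k ∈ Finset.Icc n l, ∫ ω, W j ω * W k ω ∂μ
      = (∑ j ∈ Finset.Icc n l, b j)^2
        + ∑ j ∈ Finset.Icc n l, (a (j+1) - b j) * b j := by
    simp only [hval]
    rw [Finset.sum_congr rfl (fun j hj => Finset.sum_add_distrib), Finset.sum_add_distrib]
    congr 1
    · rw [sq, Finset.sum_mul_sum]
    · refine Finset.sum_congr rfl fun j hj => ?_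
      rw [Finset.sum_ite_eq (Finset.Icc n l) j (fun _ => (a (j+1) - b j) * b j), if_pos hj]
  have hb0 : ∀ j, 0 ≤ b j := by
    intro j
    rw [hb]
    positivity
  have hbd : ∑ j ∈ Finset.Icc n l, (a (j+1) - b j) * b j
      ≤ M * ∑ j ∈ Finset.Icc n l, b j := by
    rw [Finset.mul_sum]
    refine Finset.sum_le_sum fun j hj => ?_
    refine mul_le_mul_of_nonneg_right ?_ (hb0 j)
    exact le_trans (le_abs_self _)
      (Finset.le_sup' (fun j => |a (j+1) - 1 / ((j : ℝ) + 1)|) hj)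
  calc ∫ ω, (∑ j ∈ Finset.Icc n l, W j ω)^2 ∂μ
      = (∑ j ∈ Finset.Icc n l, b j)^2
        + ∑ j ∈ Finset.Icc n l, (a (j+1) - b j) * b j := by rw [h1, h2]
    _ ≤ (∑ j ∈ Finset.Icc n l, b j)^2 + M * ∑ j ∈ Finset.Icc n l, b j := by linarith [hbd]
    _ = (M + ∑ j ∈ Finset.Icc n l, b j) * ∑ j ∈ Finset.Icc n l, b j := by ring

end AuxStmt14

/-- Second-moment bound: writing `a_{j+1}/(j+1) = E[X_{j+1}^4/V_{j+1}^4]`,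
`E[(∑_{j=n}^l X_{j+1}^2/V_{j+1}^2)^2]
  ≤ (max_{n ≤ j ≤ l} |a_{j+1} - 1/(j+1)| + ∑_{j=n}^l 1/(j+1)) ∑_{j=n}^l 1/(j+1)`. -/
theorem stmt14 {Ω : Type*} [MeasurableSpace Ω] (μ : Measure Ω) [IsProbabilityMeasure μ]
    (X : ℕ → Ω → ℝ)
    (hmeas : ∀ i, Measurable (X i))
    (hiid : IID μ X)
    (hsymm : SymmLaw μ X)
    (hzero : ∀ i, μ {ω | X i ω = 0} = 0)
    (a : ℕ → ℝ)
    (ha : ∀ j : ℕ, a (j+1) / ((j : ℝ) + 1) = ∫ ω, (X (j+1) ω)^4 / (V2 X (j+1) ω)^2 ∂μ)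
    (n l : ℕ) (hnl : n ≤ l) :
    ∫ ω, (∑ j ∈ Finset.Icc n l, (X (j+1) ω)^2 / V2 X (j+1) ω)^2 ∂μ
      ≤ ((Finset.Icc n l).sup' (Finset.nonempty_Icc.mpr hnl)
            (fun j => |a (j+1) - 1 / ((j : ℝ) + 1)|)
          + ∑ j ∈ Finset.Icc n l, (1 : ℝ) / ((j : ℝ) + 1))
        * ∑ j ∈ Finset.Icc n l, (1 : ℝ) / ((j : ℝ) + 1) :=
  stmt14' μ X hmeas hiid hzero a ha n l hnl
end
end
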